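/- arXiv:1803.00773 — 3 statements merged into one kernel-verified Lean document; each statement's English description precedes it below -/
import Mathlib

section
/- Let k ≥ 1, n ≥ 2k, Σ_k the set of k-sparse vectors of ℝⁿ, w a weight vector with w_i > 0 and max_i w_i = 1, R = ‖·‖_w, and H₀ a set of k indices carrying k largest weights of w. If ‖w_{H₀}‖₁ < ‖w_{H₀ᶜ}‖₁, then D_Σ(R) = sup_{z ∈ T_R(Σ_k)∖{0}} ‖z_{Tᶜ}‖_Σ²/‖z_T‖₂² = sup{ ‖z_{Tᶜ}‖_Σ²/‖z_T‖₂² : z ∈ ℝⁿ, z ≠ 0, ‖z_{H₀}‖_w = ‖z_{H₀ᶜ}‖_w }. -/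
open scoped BigOperators ENNReal RealInnerProductSpace
open MeasureTheory Metric
open Pointwise

noncomputable section

/-- The set of `k`-sparse vectors of `ℝⁿ`. -/
def sparseVecs (n k : ℕ) : Set (EuclideanSpace ℝ (Fin n)) :=
  {x | ∃ s : Finset (Fin n), s.card ≤ k ∧ ∀ i ∉ s, x i = 0}

/-- Descent set (collection of descent vectors) of `R` at `x`. -/
def descentCone {n : ℕ} (R : EuclideanSpace ℝ (Fin n) → ℝ) (x : EuclideanSpace ℝ (Fin n)) :
    Set (EuclideanSpace ℝ (Fin n)) := {z | R (x + z) ≤ R x}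

/-- Descent vectors of `R` at the model set `S`. -/
def descentConeSet {n : ℕ} (R : EuclideanSpace ℝ (Fin n) → ℝ)
    (S : Set (EuclideanSpace ℝ (Fin n))) : Set (EuclideanSpace ℝ (Fin n)) :=
  ⋃ x ∈ S, descentCone R x

/-- Weighted ℓ¹-norm `‖z‖_w = ∑ i, w i * |z i|`. -/
def wNorm {n : ℕ} (w : Fin n → ℝ) (z : EuclideanSpace ℝ (Fin n)) : ℝ := ∑ i, w i * |z i|

/-- Restriction of a vector to a set of coordinates (`z_S`). -/
def coordRestrict {n : ℕ} (z : EuclideanSpace ℝ (Fin n)) (S : Finset (Fin n)) :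
    EuclideanSpace ℝ (Fin n) := WithLp.toLp 2 (fun i => if i ∈ S then z i else 0)

/-- Atomic norm `‖·‖_Σ` generated by the `k`-sparse unit vectors. -/
def atomNormSigma (n k : ℕ) (z : EuclideanSpace ℝ (Fin n)) : ℝ :=
  gauge (convexHull ℝ {u : EuclideanSpace ℝ (Fin n) | u ∈ sparseVecs n k ∧ ‖u‖ = 1}) z

namespace DsigmaAux

variable {n k : ℕ}

abbrev E (n : ℕ) := EuclideanSpace ℝ (Fin n)

def Atoms (n k : ℕ) : Set (E n) := {u : E n | u ∈ sparseVecs n k ∧ ‖u‖ = 1}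

lemma atomNormSigma_eq (z : E n) :
    atomNormSigma n k z = gauge (convexHull ℝ (Atoms n k)) z := rfl

lemma coord_le_norm (v : E n) (i : Fin n) : |v i| ≤ ‖v‖ := by
  rw [EuclideanSpace.norm_eq]
  have h1 : |v i| ^ 2 ≤ ∑ j, ‖v j‖ ^ 2 := by
    have := Finset.single_le_sum (f := fun j => ‖v j‖ ^ 2)
      (fun j _ => sq_nonneg _) (Finset.mem_univ i)
    simpa [Real.norm_eq_abs] using this
  rw [← Real.sqrt_sq_eq_abs]
  exact Real.sqrt_le_sqrt (by simpa [Real.norm_eq_abs, sq_abs] using h1)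

lemma norm_sq_restrict (z : E n) (K : Finset (Fin n)) :
    ‖coordRestrict z K‖ ^ 2 = ∑ i ∈ K, (z i) ^ 2 := by
  rw [EuclideanSpace.norm_eq, Real.sq_sqrt (by positivity)]
  have : ∀ j, ‖coordRestrict z K j‖ ^ 2 = if j ∈ K then (z j) ^ 2 else 0 := by
    intro j
    by_cases hj : j ∈ K <;> simp [coordRestrict, hj, Real.norm_eq_abs, sq_abs]
  rw [Finset.sum_congr rfl (fun j _ => this j), Finset.sum_ite_mem, Finset.univ_inter]

lemma single_mem_atoms (hk : 1 ≤ k) (i : Fin n) {c : ℝ} (hc : |c| = 1) :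
    EuclideanSpace.single i c ∈ Atoms n k := by
  refine ⟨⟨{i}, by simpa using hk, fun j hj => ?_⟩, by
    rw [EuclideanSpace.norm_single, Real.norm_eq_abs, hc]⟩
  rw [EuclideanSpace.single_apply, if_neg (by simpa using hj)]

lemma zero_mem_hull (hk : 1 ≤ k) (hn0 : 0 < n) :
    (0 : E n) ∈ convexHull ℝ (Atoms n k) := by
  have i : Fin n := ⟨0, hn0⟩
  have h1 : EuclideanSpace.single i (1:ℝ) ∈ convexHull ℝ (Atoms n k) :=
    subset_convexHull ℝ _ (single_mem_atoms hk i (by norm_num))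
  have h2 : EuclideanSpace.single i (-1:ℝ) ∈ convexHull ℝ (Atoms n k) :=
    subset_convexHull ℝ _ (single_mem_atoms hk i (by norm_num))
  have := (convex_convexHull ℝ (Atoms n k)) h1 h2 (by norm_num : (0:ℝ) ≤ 1/2)
    (by norm_num : (0:ℝ) ≤ 1/2) (by norm_num)
  convert this using 1
  ext j
  simp [EuclideanSpace.single_apply]
  by_cases hj : j = i <;> simp [hj]


lemma sum_smul_single (v : E n) : ∑ i, v i • EuclideanSpace.single i (1:ℝ) = v := by
  ext j
  have : (∑ i, v i • EuclideanSpace.single i (1:ℝ)) j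
      = ∑ i, v i * (EuclideanSpace.single i (1:ℝ) j) := by
    rw [WithLp.ofLp_sum, Finset.sum_apply]; rfl
  rw [this]
  simp [EuclideanSpace.single_apply]

lemma mem_hull_of_l1_le_one (hk : 1 ≤ k) (hn0 : 0 < n) {v : E n}
    (h : ∑ i, |v i| ≤ 1) : v ∈ convexHull ℝ (Atoms n k) := by
  set c : ℝ := ∑ i, |v i| with hc
  have hc0 : 0 ≤ c := Finset.sum_nonneg fun i _ => abs_nonneg _
  rcases eq_or_lt_of_le hc0 with hc' | hc'
  · have hv : v = 0 := by
      ext i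
      have h1 : |v i| ≤ c := Finset.single_le_sum (f := fun i => |v i|)
        (fun i _ => abs_nonneg _) (Finset.mem_univ i)
      have : |v i| = 0 := le_antisymm (by linarith) (abs_nonneg _)
      simpa using abs_eq_zero.mp this
    rw [hv]; exact zero_mem_hull hk hn0
  · -- centerMass argument
    have hmem : c⁻¹ • v ∈ convexHull ℝ (Atoms n k) := by
      have := Finset.centerMass_mem_convexHull (t := Finset.univ)
        (w := fun i => |v i|)
        (z := fun i => if 0 ≤ v i then EuclideanSpace.single i (1:ℝ)
          else EuclideanSpace.single i (-1:ℝ))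
        (fun i _ => abs_nonneg _) (by simpa [← hc] using hc')
        (fun i _ => by
          by_cases hvi : 0 ≤ v i
          · simpa [hvi] using single_mem_atoms hk i (c := (1:ℝ)) (by norm_num)
          · simpa [hvi] using single_mem_atoms hk i (c := (-1:ℝ)) (by norm_num))
      have heq : Finset.univ.centerMass (fun i => |v i|)
          (fun i => if 0 ≤ v i then EuclideanSpace.single i (1:ℝ)
            else EuclideanSpace.single i (-1:ℝ)) = c⁻¹ • v := by
        rw [Finset.centerMass]
        congr 1
        conv_rhs => rw [← sum_smul_single v]
        refine Finset.sum_congr rfl fun i _ => ?_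
        by_cases hvi : 0 ≤ v i
        · simp [hvi, abs_of_nonneg hvi]
        · push_neg at hvi
          rw [if_neg (not_le.mpr hvi), abs_of_neg hvi]
          rw [show EuclideanSpace.single i (-1:ℝ) = -EuclideanSpace.single i (1:ℝ) by
            ext j
            simp only [EuclideanSpace.single_apply]
            rw [show (-EuclideanSpace.single i (1:ℝ)) j = -(EuclideanSpace.single i (1:ℝ) j) from rfl,
              EuclideanSpace.single_apply]
            by_cases hj : j = i <;> simp [hj]]
          rw [smul_neg, ← neg_smul, neg_neg]
      rw [← heq]; exact this
    have : v = c • (c⁻¹ • v) + (1 - c) • (0 : E n) := by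
      rw [smul_zero, add_zero, smul_inv_smul₀ (ne_of_gt hc')]
    rw [this]
    exact (convex_convexHull ℝ (Atoms n k)) hmem (zero_mem_hull hk hn0)
      hc0 (by linarith) (by ring)

lemma gauge_le_l1 (hk : 1 ≤ k) (hn0 : 0 < n) (v : E n) :
    gauge (convexHull ℝ (Atoms n k)) v ≤ ∑ i, |v i| := by
  set c : ℝ := ∑ i, |v i| with hc
  have hc0 : 0 ≤ c := Finset.sum_nonneg fun i _ => abs_nonneg _
  rcases eq_or_lt_of_le hc0 with hc' | hc'
  · have hv : v = 0 := by
      ext i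
      have h1 : |v i| ≤ c := Finset.single_le_sum (f := fun i => |v i|)
        (fun i _ => abs_nonneg _) (Finset.mem_univ i)
      have : |v i| = 0 := le_antisymm (hc' ▸ h1) (abs_nonneg _)
      simpa using abs_eq_zero.mp this
    rw [hv, gauge_zero, ← hc']
  · refine gauge_le_of_mem hc0 ?_
    refine ⟨c⁻¹ • v, mem_hull_of_l1_le_one hk hn0 ?_, smul_inv_smul₀ (ne_of_gt hc') v⟩
    have : ∀ i, |(c⁻¹ • v) i| = c⁻¹ * |v i| := by
      intro i
      have : (c⁻¹ • v) i = c⁻¹ * v i := rfl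
      rw [this, abs_mul, abs_of_nonneg (inv_nonneg.mpr hc0)]
    rw [Finset.sum_congr rfl fun i _ => this i, ← Finset.mul_sum, ← hc,
      inv_mul_cancel₀ (ne_of_gt hc')]

lemma hull_mem_nhds (hk : 1 ≤ k) (hn0 : 0 < n) :
    convexHull ℝ (Atoms n k) ∈ nhds (0 : E n) := by
  refine Filter.mem_of_superset (Metric.ball_mem_nhds (0 : E n)
    (by positivity : (0:ℝ) < 1/(n+1))) ?_
  intro v hv
  rw [Metric.mem_ball, dist_zero_right] at hv
  refine mem_hull_of_l1_le_one hk hn0 ?_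
  have h1 : ∑ i, |v i| ≤ (n : ℝ) * ‖v‖ := by
    have := Finset.sum_le_card_nsmul Finset.univ (fun i => |v i|) ‖v‖
      (fun i _ => coord_le_norm v i)
    simpa [nsmul_eq_mul] using this
  have h2 : (n:ℝ) * ‖v‖ ≤ (n:ℝ) * (1/(n+1)) :=
    mul_le_mul_of_nonneg_left hv.le (by positivity)
  have h3 : (n:ℝ) * (1/(n+1)) ≤ 1 := by
    rw [mul_one_div, div_le_one (by positivity)]; linarith
  linarith

lemma absorbent_hull (hk : 1 ≤ k) (hn0 : 0 < n) :
    Absorbent ℝ (convexHull ℝ (Atoms n k)) :=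
  absorbent_nhds_zero (hull_mem_nhds hk hn0)


/-- signed permutation as a linear map -/
def spMap (n : ℕ) (π : Equiv.Perm (Fin n)) (ε : Fin n → ℝ) : E n →ₗ[ℝ] E n where
  toFun v := WithLp.toLp 2 (fun i => ε i * v (π i))
  map_add' u v := by
    ext i
    show ε i * ((u + v) (π i)) = ε i * u (π i) + ε i * v (π i)
    rw [show (u + v) (π i) = u (π i) + v (π i) from rfl]; ring
  map_smul' c v := by
    ext i
    show ε i * ((c • v) (π i)) = c * (ε i * v (π i))
    rw [show (c • v) (π i) = c * v (π i) from rfl]; ring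

def spInvSigns (π : Equiv.Perm (Fin n)) (ε : Fin n → ℝ) : Fin n → ℝ := fun i => ε (π⁻¹ i)

lemma spMap_apply (π : Equiv.Perm (Fin n)) (ε : Fin n → ℝ) (v : E n) (i : Fin n) :
    spMap n π ε v i = ε i * v (π i) := rfl

lemma spMap_left_inv (π : Equiv.Perm (Fin n)) (ε : Fin n → ℝ)
    (hε : ∀ i, ε i = 1 ∨ ε i = -1) (v : E n) :
    spMap n π⁻¹ (spInvSigns π ε) (spMap n π ε v) = v := by
  ext i
  rw [spMap_apply, spMap_apply, spInvSigns]
  rw [show π (π⁻¹ i) = i from π.apply_symm_apply i]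
  rcases hε (π⁻¹ i) with h | h <;> rw [h] <;> ring

lemma spMap_right_inv (π : Equiv.Perm (Fin n)) (ε : Fin n → ℝ)
    (hε : ∀ i, ε i = 1 ∨ ε i = -1) (v : E n) :
    spMap n π ε (spMap n π⁻¹ (spInvSigns π ε) v) = v := by
  ext i
  rw [spMap_apply, spMap_apply, spInvSigns]
  rw [show π⁻¹ (π i) = i from π.symm_apply_apply i]
  rcases hε i with h | h <;> rw [h] <;> ring

lemma spMap_injective (π : Equiv.Perm (Fin n)) (ε : Fin n → ℝ)
    (hε : ∀ i, ε i = 1 ∨ ε i = -1) : Function.Injective (spMap n π ε) :=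
  Function.LeftInverse.injective (g := spMap n π⁻¹ (spInvSigns π ε))
    (spMap_left_inv π ε hε)

lemma spMap_norm (π : Equiv.Perm (Fin n)) (ε : Fin n → ℝ)
    (hε : ∀ i, ε i = 1 ∨ ε i = -1) (v : E n) : ‖spMap n π ε v‖ = ‖v‖ := by
  rw [EuclideanSpace.norm_eq, EuclideanSpace.norm_eq]
  congr 1
  rw [← Equiv.sum_comp π (fun i => ‖v i‖ ^ 2)]
  refine Finset.sum_congr rfl fun i _ => ?_
  rw [spMap_apply, Real.norm_eq_abs, Real.norm_eq_abs, abs_mul]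
  rcases hε i with h | h <;> rw [h] <;> norm_num

lemma spMap_atoms_sub (π : Equiv.Perm (Fin n)) (ε : Fin n → ℝ)
    (hε : ∀ i, ε i = 1 ∨ ε i = -1) :
    spMap n π ε '' Atoms n k ⊆ Atoms n k := by
  rintro _ ⟨u, ⟨⟨s, hs, h0⟩, hnorm⟩, rfl⟩
  refine ⟨⟨s.image π.symm, (Finset.card_image_le).trans hs, fun i hi => ?_⟩,
    by rw [spMap_norm π ε hε, hnorm]⟩
  rw [spMap_apply]
  have : π i ∉ s := by
    intro hmem
    exact hi (Finset.mem_image.mpr ⟨π i, hmem, by simp⟩)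
  rw [h0 _ this, mul_zero]

lemma spMap_atoms (π : Equiv.Perm (Fin n)) (ε : Fin n → ℝ)
    (hε : ∀ i, ε i = 1 ∨ ε i = -1) :
    spMap n π ε '' Atoms n k = Atoms n k := by
  refine le_antisymm (spMap_atoms_sub π ε hε) ?_
  intro a ha
  have hε' : ∀ i, spInvSigns π ε i = 1 ∨ spInvSigns π ε i = -1 := fun i => hε _
  refine ⟨spMap n π⁻¹ (spInvSigns π ε) a, ?_, spMap_right_inv π ε hε a⟩
  exact spMap_atoms_sub π⁻¹ (spInvSigns π ε) hε' ⟨a, ha, rfl⟩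

lemma lin_image_smul (f : E n →ₗ[ℝ] E n) (r : ℝ) (s : Set (E n)) :
    f '' (r • s) = r • (f '' s) := by
  ext y
  constructor
  · rintro ⟨x, ⟨u, hu, rfl⟩, rfl⟩
    exact ⟨f u, ⟨u, hu, rfl⟩, (f.map_smul r u).symm⟩
  · rintro ⟨x, ⟨u, hu, rfl⟩, rfl⟩
    exact ⟨r • u, ⟨u, hu, rfl⟩, f.map_smul r u⟩

lemma gauge_spMap (π : Equiv.Perm (Fin n)) (ε : Fin n → ℝ)
    (hε : ∀ i, ε i = 1 ∨ ε i = -1) (v : E n) :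
    gauge (convexHull ℝ (Atoms n k)) (spMap n π ε v)
      = gauge (convexHull ℝ (Atoms n k)) v := by
  have himg : spMap n π ε '' (convexHull ℝ (Atoms n k)) = convexHull ℝ (Atoms n k) := by
    rw [LinearMap.image_convexHull, spMap_atoms π ε hε]
  have key : ∀ r : ℝ, (spMap n π ε v ∈ r • convexHull ℝ (Atoms n k)
      ↔ v ∈ r • convexHull ℝ (Atoms n k)) := by
    intro r
    have h2 : spMap n π ε '' (r • convexHull ℝ (Atoms n k))
        = r • convexHull ℝ (Atoms n k) := by
      rw [lin_image_smul, himg]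
    conv_lhs => rw [← h2]
    exact (spMap_injective π ε hε).mem_set_image
  unfold gauge
  congr 1
  ext r
  simp only [Set.mem_setOf_eq, key r]

/-- flipping the sign of one coordinate -/
lemma gauge_flip (j : Fin n) (v : E n) :
    gauge (convexHull ℝ (Atoms n k)) (WithLp.toLp 2 (Function.update v j (-(v j))))
      = gauge (convexHull ℝ (Atoms n k)) v := by
  have hε : ∀ i : Fin n, (if i = j then (-1:ℝ) else 1) = 1 ∨ (if i = j then (-1:ℝ) else 1) = -1 := by
    intro i; by_cases hij : i = j <;> simp [hij]
  have := gauge_spMap (k := k) (Equiv.refl (Fin n)) (fun i => if i = j then (-1:ℝ) else 1) hε v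
  convert this using 2
  ext i
  rw [spMap_apply]
  by_cases hij : i = j
  · subst hij; simp [Function.update_self]
  · simp [Function.update_of_ne hij, hij]


def spMap' (n : ℕ) (π : Equiv.Perm (Fin n)) (ε : Fin n → ℝ) : E n → E n :=
  fun v => WithLp.toLp 2 (fun i => ε i * v (π i))

lemma gauge_spMap' (π : Equiv.Perm (Fin n)) (ε : Fin n → ℝ)
    (hε : ∀ i, ε i = 1 ∨ ε i = -1) (v : E n) :
    gauge (convexHull ℝ (Atoms n k)) (spMap' n π ε v)
      = gauge (convexHull ℝ (Atoms n k)) v := by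
  have h : spMap' n π ε v = spMap n π ε v := rfl
  rw [h, gauge_spMap π ε hε v]

/-- single coordinate monotonicity -/
lemma gauge_single_coord (hk : 1 ≤ k) (hn0 : 0 < n) (x y : E n) (j : Fin n)
    (hxy : ∀ i, i ≠ j → x i = y i) (h1 : |x j| ≤ y j) :
    gauge (convexHull ℝ (Atoms n k)) x ≤ gauge (convexHull ℝ (Atoms n k)) y := by
  set s := convexHull ℝ (Atoms n k) with hs
  rcases eq_or_lt_of_le ((abs_nonneg (x j)).trans h1) with hy0 | hy0
  · have : x = y := by
      ext i
      by_cases hij : i = j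
      · subst hij
        have : |x i| = 0 := le_antisymm (hy0 ▸ h1) (abs_nonneg _)
        rw [abs_eq_zero.mp this, ← hy0]
      · exact hxy i hij
    rw [this]
  · obtain ⟨hxl, hxu⟩ := abs_le.mp h1
    set θ : ℝ := (x j + y j) / (2 * y j) with hθ
    have hθ0 : 0 ≤ θ := div_nonneg (by linarith) (by linarith)
    have hθ1 : θ ≤ 1 := by
      rw [hθ, div_le_one (by linarith)]; linarith
    set y'' : E n := WithLp.toLp 2 (Function.update y j (-(y j))) with hy''
    have hdecomp : x = θ • y + (1 - θ) • y'' := by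
      ext i
      show x i = θ * y i + (1 - θ) * y'' i
      by_cases hij : i = j
      · subst hij
        simp only [hy'', WithLp.ofLp_toLp]
        rw [Function.update_self]
        rw [show θ * y i + (1 - θ) * -y i = (2 * θ - 1) * y i by ring, hθ]
        field_simp
        ring
      · simp only [hy'', WithLp.ofLp_toLp]
        rw [Function.update_of_ne hij, hxy i hij]; ring
    calc gauge s x = gauge s (θ • y + (1 - θ) • y'') := by rw [← hdecomp]
      _ ≤ gauge s (θ • y) + gauge s ((1 - θ) • y'') :=
          gauge_add_le (convex_convexHull ℝ _) (absorbent_hull hk hn0) _ _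
      _ = θ * gauge s y + (1 - θ) * gauge s y'' := by
          rw [gauge_smul_of_nonneg hθ0, gauge_smul_of_nonneg (by linarith : (0:ℝ) ≤ 1 - θ)]
          rfl
      _ = gauge s y := by rw [hy'', gauge_flip j y]; ring

/-- full monotonicity -/
lemma gauge_mono (hk : 1 ≤ k) (hn0 : 0 < n) (x y : E n)
    (h : ∀ i, |x i| ≤ y i) :
    gauge (convexHull ℝ (Atoms n k)) x ≤ gauge (convexHull ℝ (Atoms n k)) y := by
  set s := convexHull ℝ (Atoms n k) with hs
  have key : ∀ t : Finset (Fin n),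
      gauge s (WithLp.toLp 2 (fun i => if i ∈ t then x i else y i)) ≤ gauge s y := by
    intro t
    induction t using Finset.induction_on with
    | empty => simp
    | @insert j t hj ih =>
      refine le_trans (gauge_single_coord hk hn0 _ (WithLp.toLp 2 (fun i => if i ∈ t then x i else y i)) j
        ?_ ?_) ih
      · intro i hij
        by_cases hit : i ∈ t
        · simp [hit, Finset.mem_insert, hij]
        · simp [hit, Finset.mem_insert, hij]
      · simp only [WithLp.ofLp_toLp, Finset.mem_insert, true_or, if_pos, hj, if_neg]
        simpa [hj] using h j
  have := key Finset.univ
  simpa using this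


def IsTopK (k : ℕ) (y : E n) (K : Finset (Fin n)) : Prop :=
  K.card = k ∧ ∀ i ∈ K, ∀ j ∉ K, |y j| ≤ |y i|

lemma topk_pair (y : E n) (K K' : Finset (Fin n))
    (hK : IsTopK k y K) (hK' : IsTopK k y K') :
    (∑ i ∈ K, y i ^ 2 = ∑ i ∈ K', y i ^ 2) ∧
      gauge (convexHull ℝ (Atoms n k)) (coordRestrict y Kᶜ)
        = gauge (convexHull ℝ (Atoms n k)) (coordRestrict y K'ᶜ) := by
  generalize hd : (K \ K').card = d
  induction d generalizing K with
  | zero =>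
    have hsub : K ⊆ K' := Finset.sdiff_eq_empty_iff_subset.mp (Finset.card_eq_zero.mp hd)
    have : K = K' := Finset.eq_of_subset_of_card_le hsub (le_of_eq (hK'.1.trans hK.1.symm))
    rw [this]; exact ⟨rfl, rfl⟩
  | succ d ih =>
    obtain ⟨i, hi⟩ : (K \ K').Nonempty := Finset.card_pos.mp (by omega)
    obtain ⟨hiK, hiK'⟩ := Finset.mem_sdiff.mp hi
    obtain ⟨j, hj⟩ : (K' \ K).Nonempty := by
      refine Finset.card_pos.mp ?_
      rw [← Finset.card_sdiff_comm (hK.1.trans hK'.1.symm), hd]; omega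
    obtain ⟨hjK', hjK⟩ := Finset.mem_sdiff.mp hj
    have hij : i ≠ j := fun h => hjK (h ▸ hiK)
    have habs : |y i| = |y j| :=
      le_antisymm (hK'.2 j hjK' i hiK') (hK.2 i hiK j hjK)
    set K₁ : Finset (Fin n) := insert j (K.erase i) with hK₁def
    have hjKe : j ∉ K.erase i := fun h => hjK (Finset.mem_of_mem_erase h)
    have hiK₁ : i ∉ K₁ := by
      rw [hK₁def, Finset.mem_insert]
      push_neg
      exact ⟨hij, Finset.notMem_erase i K⟩
    have hjK₁ : j ∈ K₁ := Finset.mem_insert_self j _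
    have hcard₁ : K₁.card = k := by
      rw [hK₁def, Finset.card_insert_of_notMem hjKe, Finset.card_erase_of_mem hiK]
      have h0 : 0 < K.card := Finset.card_pos.mpr ⟨i, hiK⟩
      have hKc : K.card = k := hK.1
      omega
    have hK₁ : IsTopK k y K₁ := by
      refine ⟨hcard₁, fun a ha b hb => ?_⟩
      have haK : a = j ∨ a ∈ K := by
        rcases Finset.mem_insert.mp (hK₁def ▸ ha) with h | h
        · exact Or.inl h
        · exact Or.inr (Finset.mem_of_mem_erase h)
      have hbK : b = i ∨ b ∉ K := by
        rw [hK₁def, Finset.mem_insert] at hb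
        push_neg at hb
        by_cases hbi : b = i
        · exact Or.inl hbi
        · exact Or.inr (fun hbK => hb.2 (Finset.mem_erase.mpr ⟨hbi, hbK⟩))
      have key : ∀ a', a' ∈ K → |y b| ≤ |y a'| := by
        intro a' ha'
        rcases hbK with rfl | hbK
        · exact habs.le.trans (hK.2 a' ha' j hjK)
        · exact hK.2 a' ha' b hbK
      rcases haK with rfl | haK
      · rcases hbK with rfl | hbK
        · exact habs.le
        · exact (hK.2 i hiK b hbK).trans habs.le
      · exact key a haK
    have hsum : ∑ i' ∈ K, y i' ^ 2 = ∑ i' ∈ K₁, y i' ^ 2 := by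
      rw [hK₁def, Finset.sum_insert hjKe, ← Finset.sum_erase_add K _ hiK]
      have : y i ^ 2 = y j ^ 2 := by rw [← sq_abs (y i), ← sq_abs (y j), habs]
      rw [this]; ring
    have hgauge : gauge (convexHull ℝ (Atoms n k)) (coordRestrict y Kᶜ)
        = gauge (convexHull ℝ (Atoms n k)) (coordRestrict y K₁ᶜ) := by
      set σ : ℝ := if y j = 0 then 1 else y i / y j with hσ
      have hε : ∀ l : Fin n, (if l = i then σ else (1:ℝ)) = 1
          ∨ (if l = i then σ else (1:ℝ)) = -1 := by
        intro l
        by_cases hli : l = i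
        · rw [if_pos hli, hσ]
          by_cases hyj : y j = 0
          · rw [if_pos hyj]; exact Or.inl rfl
          · rw [if_neg hyj]
            have : |y i / y j| = 1 := by
              rw [abs_div, habs, div_self (abs_ne_zero.mpr hyj)]
            rcases (abs_eq (by norm_num : (0:ℝ) ≤ 1)).mp this with h | h
            · exact Or.inl h
            · exact Or.inr h
        · rw [if_neg hli]; exact Or.inl rfl
      have hrel : coordRestrict y K₁ᶜ
          = spMap' n (Equiv.swap i j) (fun l => if l = i then σ else 1) (coordRestrict y Kᶜ) := by
        ext l
        show (if l ∈ K₁ᶜ then y l else 0)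
          = (if l = i then σ else 1) * (if (Equiv.swap i j l) ∈ Kᶜ then y (Equiv.swap i j l) else 0)
        by_cases hli : l = i
        · subst hli
          rw [Equiv.swap_apply_left, if_pos (Finset.mem_compl.mpr hjK),
            if_pos (Finset.mem_compl.mpr hiK₁), if_pos rfl, hσ]
          by_cases hyj : y j = 0
          · rw [if_pos hyj, hyj, mul_zero]
            exact abs_eq_zero.mp (by rw [habs, hyj, abs_zero])
          · rw [if_neg hyj, div_mul_cancel₀ _ hyj]
        · by_cases hlj : l = j
          · subst hlj
            rw [Equiv.swap_apply_right, if_neg (by simpa using hjK₁),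
              if_neg hli, one_mul, if_neg (by simpa using hiK)]
          · rw [Equiv.swap_apply_of_ne_of_ne hli hlj, if_neg hli, one_mul]
            have : l ∈ K₁ ↔ l ∈ K := by
              rw [hK₁def, Finset.mem_insert, Finset.mem_erase]
              constructor
              · rintro (rfl | ⟨_, h⟩); exact absurd rfl hlj; exact h
              · intro h; exact Or.inr ⟨hli, h⟩
            by_cases hlK : l ∈ K
            · rw [if_neg (by simpa using this.mpr hlK), if_neg (by simpa using hlK)]
            · rw [if_pos (Finset.mem_compl.mpr (fun h => hlK (this.mp h))),
                if_pos (Finset.mem_compl.mpr hlK)]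
      rw [hrel, gauge_spMap' _ _ hε]
    have hd₁ : (K₁ \ K').card = d := by
      have h1 : K₁ \ K' = (K \ K').erase i := by
        rw [hK₁def, Finset.insert_sdiff_of_mem _ hjK', Finset.erase_sdiff_comm]
      rw [h1, Finset.card_erase_of_mem hi, hd]
      omega
    obtain ⟨h1, h2⟩ := ih K₁ hK₁ hd₁
    exact ⟨hsum.trans h1, hgauge.trans h2⟩


lemma wNorm_restrict (w : Fin n → ℝ) (v : E n) (S : Finset (Fin n)) :
    wNorm w (coordRestrict v S) = ∑ i ∈ S, w i * |v i| := by
  unfold wNorm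
  have : ∀ i, w i * |coordRestrict v S i| = if i ∈ S then w i * |v i| else 0 := by
    intro i
    by_cases hi : i ∈ S <;> simp [coordRestrict, hi]
  rw [Finset.sum_congr rfl fun i _ => this i, Finset.sum_ite_mem, Finset.univ_inter]

/-- relating ratio components of `z` and a sign/permutation rearrangement `y` of it -/
lemma abs_perm_rel (z y : E n) (π : Equiv.Perm (Fin n)) (h : ∀ i, y i = |z (π i)|)
    (K : Finset (Fin n)) (hK : IsTopK k y K) (Tz : Finset (Fin n)) (hTz : IsTopK k z Tz) :
    (∑ i ∈ K, y i ^ 2 = ∑ i ∈ Tz, z i ^ 2) ∧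
      gauge (convexHull ℝ (Atoms n k)) (coordRestrict y Kᶜ)
        = gauge (convexHull ℝ (Atoms n k)) (coordRestrict z Tzᶜ) := by
  set U : Finset (Fin n) := K.image π with hU
  have hmemU : ∀ i : Fin n, π i ∈ U ↔ i ∈ K := by
    intro i
    constructor
    · intro hi
      obtain ⟨i', hi', he⟩ := Finset.mem_image.mp hi
      rwa [← π.injective he]
    · intro hi; exact Finset.mem_image_of_mem π hi
  have hUtop : IsTopK k z U := by
    constructor
    · rw [hU, Finset.card_image_of_injective _ π.injective]; exact hK.1
    · intro a ha b hb
      obtain ⟨i, hiK, rfl⟩ := Finset.mem_image.mp ha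
      have hb' : π.symm b ∉ K := by
        intro hmem
        apply hb
        have : π (π.symm b) = b := π.apply_symm_apply b
        rw [← this]; exact (hmemU _).mpr hmem
      have h1 : |z b| = y (π.symm b) := by rw [h (π.symm b), π.apply_symm_apply]
      have h2 : |z (π i)| = y i := (h i).symm
      rw [h1, h2]
      have := hK.2 i hiK (π.symm b) hb'
      calc y (π.symm b) = |y (π.symm b)| := (abs_of_nonneg (by rw [h]; exact abs_nonneg _)).symm
        _ ≤ |y i| := this
        _ = y i := abs_of_nonneg (by rw [h]; exact abs_nonneg _)
  constructor
  · have h1 : ∑ i ∈ K, y i ^ 2 = ∑ b ∈ U, z b ^ 2 := by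
      rw [hU, Finset.sum_image (fun a _ b _ hab => π.injective hab)]
      refine Finset.sum_congr rfl fun i _ => ?_
      rw [h i, sq_abs]
    exact h1.trans (topk_pair z U Tz hUtop hTz).1
  · have hrel : coordRestrict y Kᶜ
        = spMap' n π (fun i => if z (π i) = 0 then 1 else y i / z (π i))
          (coordRestrict z Uᶜ) := by
      ext i
      show (if i ∈ Kᶜ then y i else 0)
        = (if z (π i) = 0 then 1 else y i / z (π i)) * (if π i ∈ Uᶜ then z (π i) else 0)
      by_cases hi : i ∈ K
      · have h0 : (if π i ∈ Uᶜ then z (π i) else 0) = 0 :=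
          if_neg (by simpa using (hmemU i).mpr hi)
        rw [h0, mul_zero, if_neg (by simpa using hi)]
      · rw [if_pos (Finset.mem_compl.mpr hi),
          if_pos (Finset.mem_compl.mpr (fun hc => hi ((hmemU i).mp hc)))]
        by_cases hz : z (π i) = 0
        · rw [if_pos hz, hz, mul_zero, h i, hz, abs_zero]
        · rw [if_neg hz, div_mul_cancel₀ _ hz]
    have hε : ∀ i : Fin n, (if z (π i) = 0 then (1:ℝ) else y i / z (π i)) = 1
        ∨ (if z (π i) = 0 then (1:ℝ) else y i / z (π i)) = -1 := by
      intro i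
      by_cases hz : z (π i) = 0
      · rw [if_pos hz]; exact Or.inl rfl
      · rw [if_neg hz]
        have : |y i / z (π i)| = 1 := by
          rw [abs_div, h i, abs_abs, div_self (abs_ne_zero.mpr hz)]
        rcases (abs_eq (by norm_num : (0:ℝ) ≤ 1)).mp this with h' | h'
        · exact Or.inl h'
        · exact Or.inr h'
    rw [hrel, gauge_spMap' π _ hε]
    exact (topk_pair z U Tz hUtop hTz).2

/-- Step A: rearrangement to put weighted mass dominance on H₀. -/
lemma placement (w : Fin n → ℝ) (H₀ : Finset (Fin n)) (hH₀card : H₀.card = k)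
    (hH₀ : ∀ i ∈ H₀, ∀ j ∉ H₀, w j ≤ w i) :
    ∀ d : ℕ, ∀ (z : E n) (S : Finset (Fin n)), S.card = k → (S \ H₀).card = d →
    (∑ i ∈ Sᶜ, w i * |z i| ≤ ∑ i ∈ S, w i * |z i|) →
    ∃ (y : E n) (π : Equiv.Perm (Fin n)), (∀ i, y i = |z (π i)|) ∧
      ∑ i ∈ H₀ᶜ, w i * y i ≤ ∑ i ∈ H₀, w i * y i := by
  intro d
  induction d with
  | zero =>
    intro z S hS hd hge
    have hsub : S ⊆ H₀ := Finset.sdiff_eq_empty_iff_subset.mp (Finset.card_eq_zero.mp hd)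
    have hSH : S = H₀ := Finset.eq_of_subset_of_card_le hsub (le_of_eq (hH₀card.trans hS.symm))
    refine ⟨WithLp.toLp 2 (fun i => |z i|), Equiv.refl _, fun i => rfl, ?_⟩
    have hgoal : ∑ i ∈ H₀ᶜ, w i * |z i| ≤ ∑ i ∈ H₀, w i * |z i| := hSH ▸ hge
    simpa using hgoal
  | succ d ih =>
    intro z S hS hd hge
    obtain ⟨j, hj⟩ : (S \ H₀).Nonempty := Finset.card_pos.mp (by omega)
    obtain ⟨hjS, hjH⟩ := Finset.mem_sdiff.mp hj
    obtain ⟨i, hi⟩ : (H₀ \ S).Nonempty := by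
      refine Finset.card_pos.mp ?_
      rw [← Finset.card_sdiff_comm (hS.trans hH₀card.symm), hd]; omega
    obtain ⟨hiH, hiS⟩ := Finset.mem_sdiff.mp hi
    have hij : i ≠ j := fun h => hjH (h ▸ hiH)
    set τ := Equiv.swap i j with hτ
    set z' : E n := WithLp.toLp 2 (fun l => z (τ l)) with hz'
    set S' : Finset (Fin n) := insert i (S.erase j) with hS'def
    have hiSe : i ∉ S.erase j := fun h => hiS (Finset.mem_of_mem_erase h)
    have hS' : S'.card = k := by
      rw [hS'def, Finset.card_insert_of_notMem hiSe, Finset.card_erase_of_mem hjS]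
      have h0 : 0 < S.card := Finset.card_pos.mpr ⟨j, hjS⟩
      omega
    have hd' : (S' \ H₀).card = d := by
      rw [hS'def, Finset.insert_sdiff_of_mem _ hiH, Finset.erase_sdiff_comm,
        Finset.card_erase_of_mem hj, hd]
      omega
    have hτi : τ i = j := Equiv.swap_apply_left i j
    have hτj : τ j = i := Equiv.swap_apply_right i j
    have hτl : ∀ l, l ≠ i → l ≠ j → τ l = l := fun l h1 h2 =>
      Equiv.swap_apply_of_ne_of_ne h1 h2
    have hge' : ∑ l ∈ S'ᶜ, w l * |z' l| ≤ ∑ l ∈ S', w l * |z' l| := by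
      have e1 : ∑ l ∈ S', w l * |z' l|
          = w i * |z j| + (∑ l ∈ S, w l * |z l| - w j * |z j|) := by
        rw [hS'def, Finset.sum_insert hiSe]
        have : ∑ l ∈ S.erase j, w l * |z' l| = ∑ l ∈ S.erase j, w l * |z l| := by
          refine Finset.sum_congr rfl fun l hl => ?_
          obtain ⟨hlj, hlS⟩ := Finset.mem_erase.mp hl
          have hli : l ≠ i := fun h => hiS (h ▸ hlS)
          rw [hz']
          show w l * |z (τ l)| = w l * |z l|
          rw [hτl l hli hlj]
        rw [this, ← Finset.sum_erase_add S _ hjS]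
        have : z' i = z j := by rw [hz']; show z (τ i) = z j; rw [hτi]
        rw [this]; ring
      have e2 : ∑ l ∈ S'ᶜ, w l * |z' l|
          = w j * |z i| + (∑ l ∈ Sᶜ, w l * |z l| - w i * |z i|) := by
        have hcompl : S'ᶜ = insert j (Sᶜ.erase i) := by
          rw [hS'def, Finset.compl_insert, Finset.compl_erase]
          rw [Finset.erase_insert_of_ne (fun h => hij h.symm)]
        have hjne : j ∉ Sᶜ.erase i := fun h =>
          (Finset.mem_compl.mp (Finset.mem_of_mem_erase h)) hjS
        rw [hcompl, Finset.sum_insert hjne]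
        have : ∑ l ∈ Sᶜ.erase i, w l * |z' l| = ∑ l ∈ Sᶜ.erase i, w l * |z l| := by
          refine Finset.sum_congr rfl fun l hl => ?_
          obtain ⟨hli, hlSc⟩ := Finset.mem_erase.mp hl
          have hlj : l ≠ j := fun h => (Finset.mem_compl.mp hlSc) (h ▸ hjS)
          rw [hz']
          show w l * |z (τ l)| = w l * |z l|
          rw [hτl l hli hlj]
        rw [this, ← Finset.sum_erase_add Sᶜ _ (Finset.mem_compl.mpr hiS)]
        have : z' j = z i := by rw [hz']; show z (τ j) = z i; rw [hτj]
        rw [this]; ring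
      have hwij : w j ≤ w i := hH₀ i hiH j hjH
      have hprod : 0 ≤ (w i - w j) * (|z i| + |z j|) :=
        mul_nonneg (by linarith) (by positivity)
      rw [e1, e2]
      nlinarith [hprod]
    obtain ⟨y, π', hy, hsum⟩ := ih z' S' hS' hd' hge'
    refine ⟨y, π'.trans τ, fun l => ?_, hsum⟩
    rw [hy l]
    rfl


/-- membership in the descent cone set from balanced masses -/
lemma mem_descent_of_balanced (w : Fin n → ℝ) (H₀ : Finset (Fin n)) (hH₀card : H₀.card = k)
    (z : E n) (hmass : wNorm w (coordRestrict z H₀) = wNorm w (coordRestrict z H₀ᶜ)) :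
    z ∈ descentConeSet (wNorm w) (sparseVecs n k) := by
  set x : E n := -coordRestrict z H₀ with hx
  have hx_sparse : x ∈ sparseVecs n k := by
    refine ⟨H₀, le_of_eq hH₀card, fun i hi => ?_⟩
    show -(if i ∈ H₀ then z i else 0) = 0
    rw [if_neg hi, neg_zero]
  have hxz : x + z = coordRestrict z H₀ᶜ := by
    ext i
    show -(if i ∈ H₀ then z i else 0) + z i = if i ∈ H₀ᶜ then z i else 0
    by_cases hi : i ∈ H₀
    · rw [if_pos hi, if_neg (by simpa using hi)]; ring
    · rw [if_neg hi, if_pos (Finset.mem_compl.mpr hi), neg_zero, zero_add]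
  have hxnorm : wNorm w x = wNorm w (coordRestrict z H₀) := by
    unfold wNorm
    refine Finset.sum_congr rfl fun i _ => ?_
    show w i * |(-(if i ∈ H₀ then z i else 0))| = w i * |if i ∈ H₀ then z i else 0|
    rw [abs_neg]
  have hdesc : z ∈ descentCone (wNorm w) x := by
    show wNorm w (x + z) ≤ wNorm w x
    rw [hxz, hxnorm, hmass]
  exact Set.mem_biUnion hx_sparse hdesc

/-- the ratio is bounded by n² -/
lemma ratio_bound (hk : 1 ≤ k) (hn0 : 0 < n)
    (z : E n) (Tz : Finset (Fin n)) (hTz : IsTopK k z Tz) :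
    gauge (convexHull ℝ (Atoms n k)) (coordRestrict z Tzᶜ) ^ 2 / ‖coordRestrict z Tz‖ ^ 2
      ≤ (n : ℝ) ^ 2 := by
  obtain ⟨i₀, hi₀⟩ : Tz.Nonempty := Finset.card_pos.mp (by rw [hTz.1]; omega)
  have hnum : gauge (convexHull ℝ (Atoms n k)) (coordRestrict z Tzᶜ) ≤ (n : ℝ) * |z i₀| := by
    refine le_trans (gauge_le_l1 hk hn0 _) ?_
    have hterm : ∀ i : Fin n, |coordRestrict z Tzᶜ i| ≤ |z i₀| := by
      intro i
      show |if i ∈ Tzᶜ then z i else 0| ≤ |z i₀|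
      by_cases hi : i ∈ Tzᶜ
      · rw [if_pos hi]; exact hTz.2 i₀ hi₀ i (Finset.mem_compl.mp hi)
      · rw [if_neg hi, abs_zero]; exact abs_nonneg _
    have := Finset.sum_le_card_nsmul Finset.univ (fun i => |coordRestrict z Tzᶜ i|) |z i₀|
      (fun i _ => hterm i)
    simpa [nsmul_eq_mul, Finset.card_univ] using this
  have hden : (z i₀) ^ 2 ≤ ‖coordRestrict z Tz‖ ^ 2 := by
    rw [norm_sq_restrict]
    exact Finset.single_le_sum (f := fun i => (z i)^2) (fun i _ => sq_nonneg _) hi₀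
  have hnum2 : gauge (convexHull ℝ (Atoms n k)) (coordRestrict z Tzᶜ) ^ 2
      ≤ (n : ℝ) ^ 2 * ‖coordRestrict z Tz‖ ^ 2 := by
    have h1 : gauge (convexHull ℝ (Atoms n k)) (coordRestrict z Tzᶜ) ^ 2
        ≤ ((n : ℝ) * |z i₀|) ^ 2 := pow_le_pow_left₀ (gauge_nonneg _) hnum 2
    calc gauge (convexHull ℝ (Atoms n k)) (coordRestrict z Tzᶜ) ^ 2
        ≤ ((n : ℝ) * |z i₀|) ^ 2 := h1
      _ = (n:ℝ)^2 * (z i₀)^2 := by rw [mul_pow, sq_abs]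
      _ ≤ (n:ℝ)^2 * ‖coordRestrict z Tz‖ ^ 2 := by
          exact mul_le_mul_of_nonneg_left hden (by positivity)
  rcases eq_or_lt_of_le (by positivity : (0:ℝ) ≤ ‖coordRestrict z Tz‖ ^ 2) with h0 | h0
  · rw [← h0, div_zero]; positivity
  · rw [div_le_iff₀ h0]; exact hnum2

/-- the main path construction -/
lemma final_step (hk : 1 ≤ k) (hn0 : 0 < n) (w : Fin n → ℝ)
    (T : E n → Finset (Fin n)) (hT : ∀ z : E n, IsTopK k z (T z))
    (H₀ : Finset (Fin n))
    (y : E n) (hynn : ∀ i, 0 ≤ y i) (K : Finset (Fin n)) (hKy : IsTopK k y K)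
    (m : ℝ) (hm : 0 < m)
    (z' : E n)
    (hz'K : ∀ i ∈ K, m ≤ z' i ∧ z' i ≤ y i)
    (hz'off : ∀ i ∉ K, y i ≤ z' i ∧ z' i ≤ m)
    (hmass : ∑ i ∈ H₀, w i * z' i = ∑ i ∈ H₀ᶜ, w i * z' i) :
    ∃ zs : E n, zs ≠ 0 ∧
      wNorm w (coordRestrict zs H₀) = wNorm w (coordRestrict zs H₀ᶜ) ∧
      gauge (convexHull ℝ (Atoms n k)) (coordRestrict y Kᶜ) ^ 2 / (∑ i ∈ K, y i ^ 2)
        ≤ gauge (convexHull ℝ (Atoms n k)) (coordRestrict zs (T zs)ᶜ) ^ 2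
            / ‖coordRestrict zs (T zs)‖ ^ 2 := by
  have hz'nn : ∀ i, 0 ≤ z' i := by
    intro i
    by_cases hi : i ∈ K
    · exact le_trans hm.le (hz'K i hi).1
    · exact le_trans (hynn i) (hz'off i hi).1
  have hKz' : IsTopK k z' K := by
    refine ⟨hKy.1, fun i hi j hj => ?_⟩
    rw [abs_of_nonneg (hz'nn i), abs_of_nonneg (hz'nn j)]
    exact le_trans (hz'off j hj).2 (hz'K i hi).1
  obtain ⟨i₀, hi₀⟩ : K.Nonempty := Finset.card_pos.mp (by rw [hKy.1]; omega)
  have hz'i₀ : 0 < z' i₀ := lt_of_lt_of_le hm (hz'K i₀ hi₀).1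
  have hz'ne : z' ≠ 0 := by
    intro h
    have : z' i₀ = 0 := by rw [h]; rfl
    linarith
  have hmasses : wNorm w (coordRestrict z' H₀) = wNorm w (coordRestrict z' H₀ᶜ) := by
    rw [wNorm_restrict, wNorm_restrict]
    have h1 : ∀ A : Finset (Fin n), ∑ i ∈ A, w i * |z' i| = ∑ i ∈ A, w i * z' i := by
      intro A
      exact Finset.sum_congr rfl fun i _ => by rw [abs_of_nonneg (hz'nn i)]
    rw [h1, h1]; exact hmass
  have hTz' := hT z'
  obtain ⟨hdsum, hdgauge⟩ := topk_pair z' K (T z') hKz' hTz'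
  have hnormeq : ‖coordRestrict z' (T z')‖ ^ 2 = ∑ i ∈ K, z' i ^ 2 := by
    rw [norm_sq_restrict, ← hdsum]
  have hnum : gauge (convexHull ℝ (Atoms n k)) (coordRestrict y Kᶜ)
      ≤ gauge (convexHull ℝ (Atoms n k)) (coordRestrict z' Kᶜ) := by
    refine gauge_mono hk hn0 _ _ fun i => ?_
    show |if i ∈ Kᶜ then y i else 0| ≤ (if i ∈ Kᶜ then z' i else 0)
    by_cases hi : i ∈ Kᶜ
    · rw [if_pos hi, if_pos hi, abs_of_nonneg (hynn i)]
      exact (hz'off i (Finset.mem_compl.mp hi)).1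
    · rw [if_neg hi, if_neg hi, abs_zero]
  have hden_pos : 0 < ∑ i ∈ K, z' i ^ 2 := by
    refine Finset.sum_pos' (fun i _ => sq_nonneg _) ⟨i₀, hi₀, by positivity⟩
  have hden_le : ∑ i ∈ K, z' i ^ 2 ≤ ∑ i ∈ K, y i ^ 2 := by
    refine Finset.sum_le_sum fun i hi => ?_
    exact pow_le_pow_left₀ (hz'nn i) (hz'K i hi).2 2
  refine ⟨z', hz'ne, hmasses, ?_⟩
  rw [← hdgauge, hnormeq]
  exact div_le_div₀ (sq_nonneg _) (pow_le_pow_left₀ (gauge_nonneg _) hnum 2) hden_pos hden_le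


end DsigmaAux

open DsigmaAux

/-- Lemma 10 of the paper, under `‖w_{H₀}‖₁ < ‖w_{H₀ᶜ}‖₁` the supremum defining
`D_Σ(R)` is attained on the set where the weighted masses on `H₀` and `H₀ᶜ` are equal. -/
theorem Dsigma_eq_sup_over_H0_eq
    (n k : ℕ) (hk : 1 ≤ k) (hn : 2 * k ≤ n)
    (w : Fin n → ℝ) (hpos : ∀ i, 0 < w i) (hle : ∀ i, w i ≤ 1) (hmax : ∃ i, w i = 1)
    (T : EuclideanSpace ℝ (Fin n) → Finset (Fin n))
    (hT : ∀ z, (T z).card = k ∧ ∀ i ∈ T z, ∀ j ∉ T z, |z j| ≤ |z i|)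
    (H₀ : Finset (Fin n)) (hH₀card : H₀.card = k)
    (hH₀ : ∀ i ∈ H₀, ∀ j ∉ H₀, w j ≤ w i)
    (hw : ∑ i ∈ H₀, w i < ∑ i ∈ H₀ᶜ, w i) :
    sSup {r : ℝ | ∃ z ∈ descentConeSet (wNorm w) (sparseVecs n k) \ {0},
        r = (atomNormSigma n k (coordRestrict z (T z)ᶜ)) ^ 2 / ‖coordRestrict z (T z)‖ ^ 2}
      = sSup {r : ℝ | ∃ z : EuclideanSpace ℝ (Fin n), z ≠ 0 ∧
          wNorm w (coordRestrict z H₀) = wNorm w (coordRestrict z H₀ᶜ) ∧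
          r = (atomNormSigma n k (coordRestrict z (T z)ᶜ)) ^ 2 / ‖coordRestrict z (T z)‖ ^ 2} := by
  have hn0 : 0 < n := by omega
  have hT' : ∀ z : E n, IsTopK k z (T z) := fun z => ⟨(hT z).1, (hT z).2⟩
  set Lset := {r : ℝ | ∃ z ∈ descentConeSet (wNorm w) (sparseVecs n k) \ {0},
      r = (atomNormSigma n k (coordRestrict z (T z)ᶜ)) ^ 2 / ‖coordRestrict z (T z)‖ ^ 2}
    with hLdef
  set Rset := {r : ℝ | ∃ z : EuclideanSpace ℝ (Fin n), z ≠ 0 ∧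
      wNorm w (coordRestrict z H₀) = wNorm w (coordRestrict z H₀ᶜ) ∧
      r = (atomNormSigma n k (coordRestrict z (T z)ᶜ)) ^ 2 / ‖coordRestrict z (T z)‖ ^ 2}
    with hRdef
  have hbddL : BddAbove Lset := by
    refine ⟨(n:ℝ)^2, ?_⟩
    rintro r ⟨z, ⟨hzdesc, hz0'⟩, rfl⟩
    rw [atomNormSigma_eq]
    exact ratio_bound hk hn0 z (T z) (hT' z)
  have hbddR : BddAbove Rset := by
    refine ⟨(n:ℝ)^2, ?_⟩
    rintro r ⟨z, hz0, hmass, rfl⟩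
    rw [atomNormSigma_eq]
    exact ratio_bound hk hn0 z (T z) (hT' z)
  -- the witness z₀ in Rset
  obtain ⟨i₁, hi₁⟩ : H₀.Nonempty := Finset.card_pos.mp (by rw [hH₀card]; omega)
  obtain ⟨j₁, hj₁c⟩ : (H₀ᶜ : Finset (Fin n)).Nonempty := by
    refine Finset.card_pos.mp ?_
    rw [Finset.card_compl, hH₀card, Fintype.card_fin]
    omega
  have hj₁ : j₁ ∉ H₀ := Finset.mem_compl.mp hj₁c
  have hij₁ : i₁ ≠ j₁ := fun h => hj₁ (h ▸ hi₁)
  set z₀ : E n := WithLp.toLp 2 (fun i => if i = i₁ then (w i₁)⁻¹ else if i = j₁ then (w j₁)⁻¹ else 0 : Fin n → ℝ)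
    with hz₀def
  have hz₀i₁ : z₀ i₁ = (w i₁)⁻¹ := by rw [hz₀def]; simp
  have hz₀ne : z₀ ≠ 0 := by
    intro h
    have h2 : z₀ i₁ = 0 := by rw [h]; rfl
    rw [hz₀i₁] at h2
    exact absurd h2 (inv_ne_zero (ne_of_gt (hpos i₁)))
  have hmass₀ : wNorm w (coordRestrict z₀ H₀) = wNorm w (coordRestrict z₀ H₀ᶜ) := by
    rw [wNorm_restrict, wNorm_restrict]
    have hA : ∑ i ∈ H₀, w i * |z₀ i| = 1 := by
      rw [Finset.sum_eq_single i₁]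
      · rw [hz₀i₁, abs_of_pos (inv_pos.mpr (hpos i₁)), mul_inv_cancel₀ (ne_of_gt (hpos i₁))]
      · intro b hb hbne
        have : z₀ b = 0 := by
          rw [hz₀def]
          have hbj : b ≠ j₁ := fun h => hj₁ (h ▸ hb)
          simp [hbne, hbj]
        rw [this, abs_zero, mul_zero]
      · intro h; exact absurd hi₁ h
    have hB : ∑ i ∈ H₀ᶜ, w i * |z₀ i| = 1 := by
      rw [Finset.sum_eq_single j₁]
      · have : z₀ j₁ = (w j₁)⁻¹ := by rw [hz₀def]; simp [Ne.symm hij₁]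
        rw [this, abs_of_pos (inv_pos.mpr (hpos j₁)), mul_inv_cancel₀ (ne_of_gt (hpos j₁))]
      · intro b hb hbne
        have hbH : b ∉ H₀ := Finset.mem_compl.mp hb
        have hbi : b ≠ i₁ := fun h => hbH (h ▸ hi₁)
        have : z₀ b = 0 := by rw [hz₀def]; simp [hbi, hbne]
        rw [this, abs_zero, mul_zero]
      · intro h; exact absurd hj₁c h
    rw [hA, hB]
  have hr₀R : (atomNormSigma n k (coordRestrict z₀ (T z₀)ᶜ)) ^ 2
      / ‖coordRestrict z₀ (T z₀)‖ ^ 2 ∈ Rset := ⟨z₀, hz₀ne, hmass₀, rfl⟩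
  have hsupR0 : 0 ≤ sSup Rset :=
    le_trans (div_nonneg (sq_nonneg _) (sq_nonneg _)) (le_csSup hbddR hr₀R)
  have hRL : Rset ⊆ Lset := by
    rintro r ⟨z, hz0, hmass, rfl⟩
    exact ⟨z, ⟨mem_descent_of_balanced w H₀ hH₀card z hmass, by simpa using hz0⟩, rfl⟩
  apply le_antisymm
  · refine Real.sSup_le ?_ hsupR0
    rintro r ⟨z, ⟨hzdesc, hz0'⟩, rfl⟩
    have hz0 : z ≠ 0 := by simpa using hz0'
    obtain ⟨x, hxs, hzdc⟩ := Set.mem_iUnion₂.mp hzdesc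
    obtain ⟨s, hscard, hs0⟩ := hxs
    have hdesc : wNorm w (x + z) ≤ wNorm w x := hzdc
    -- descent inequality on s
    have hsineq : ∑ i ∈ sᶜ, w i * |z i| ≤ ∑ i ∈ s, w i * |z i| := by
      have e1 : wNorm w (x + z)
          = ∑ i ∈ s, w i * |(x + z) i| + ∑ i ∈ sᶜ, w i * |z i| := by
        rw [wNorm, ← Finset.sum_add_sum_compl s (fun i => w i * |(x + z) i|)]
        congr 1
        refine Finset.sum_congr rfl fun i hi => ?_
        have hx0 : x i = 0 := hs0 i (Finset.mem_compl.mp hi)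
        have : (x + z) i = z i := by
          show x i + z i = z i
          rw [hx0, zero_add]
        rw [this]
      have e2 : wNorm w x = ∑ i ∈ s, w i * |x i| := by
        rw [wNorm, ← Finset.sum_add_sum_compl s (fun i => w i * |x i|)]
        have : ∑ i ∈ sᶜ, w i * |x i| = 0 := by
          refine Finset.sum_eq_zero fun i hi => ?_
          rw [hs0 i (Finset.mem_compl.mp hi), abs_zero, mul_zero]
        rw [this, add_zero]
      have hterm : ∀ i ∈ s, w i * |x i| - w i * |(x + z) i| ≤ w i * |z i| := by
        intro i _
        have h1 : |x i| - |(x + z) i| ≤ |z i| := by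
          have h2 : (x + z) i = x i + z i := rfl
          have := abs_sub_abs_le_abs_sub (x i) (x i + z i)
          rw [h2]
          have h3 : x i - (x i + z i) = -z i := by ring
          rw [h3, abs_neg] at this
          exact this
        nlinarith [(hpos i).le, abs_nonneg (z i), abs_nonneg ((x+z) i)]
      have h4 : ∑ i ∈ s, (w i * |x i| - w i * |(x + z) i|) ≤ ∑ i ∈ s, w i * |z i| :=
        Finset.sum_le_sum hterm
      rw [Finset.sum_sub_distrib] at h4
      rw [e1, e2] at hdesc
      linarith
    -- enlarge s to a set S of cardinality k
    obtain ⟨S, hsS, hScard⟩ := Finset.exists_superset_card_eq hscard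
      (by rw [Fintype.card_fin]; omega)
    have hSineq : ∑ i ∈ Sᶜ, w i * |z i| ≤ ∑ i ∈ S, w i * |z i| := by
      have hcsub : Sᶜ ⊆ sᶜ := Finset.compl_subset_compl.mpr hsS
      calc ∑ i ∈ Sᶜ, w i * |z i| ≤ ∑ i ∈ sᶜ, w i * |z i| :=
            Finset.sum_le_sum_of_subset_of_nonneg hcsub (fun i _ _ => mul_nonneg (hpos i).le (abs_nonneg _))
        _ ≤ ∑ i ∈ s, w i * |z i| := hsineq
        _ ≤ ∑ i ∈ S, w i * |z i| :=
            Finset.sum_le_sum_of_subset_of_nonneg hsS (fun i _ _ => mul_nonneg (hpos i).le (abs_nonneg _))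
    -- rearrange
    obtain ⟨y, π, hy, hyineq⟩ := placement w H₀ hH₀card hH₀ ((S \ H₀).card) z S hScard rfl hSineq
    have hynn : ∀ i, 0 ≤ y i := fun i => by rw [hy i]; exact abs_nonneg _
    set K := T y with hKdef
    have hKy : IsTopK k y K := hT' y
    obtain ⟨rels, relg⟩ := abs_perm_rel z y π hy K hKy (T z) (hT' z)
    have hrval : atomNormSigma n k (coordRestrict z (T z)ᶜ) ^ 2 / ‖coordRestrict z (T z)‖ ^ 2
        = gauge (convexHull ℝ (Atoms n k)) (coordRestrict y Kᶜ) ^ 2 / ∑ i ∈ K, y i ^ 2 := by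
      rw [atomNormSigma_eq, norm_sq_restrict, ← rels, ← relg]
    obtain ⟨i₀, hi₀K, hmin⟩ := K.exists_min_image y
      (Finset.card_pos.mp (by rw [hKy.1]; omega))
    have hoff : ∀ j ∉ K, y j ≤ y i₀ := by
      intro j hj
      have := hKy.2 i₀ hi₀K j hj
      rwa [abs_of_nonneg (hynn j), abs_of_nonneg (hynn i₀)] at this
    rcases eq_or_lt_of_le (hynn i₀) with hm0 | hm
    · -- degenerate case : the k-th largest value is 0, ratio is 0
      have hzero : coordRestrict y Kᶜ = (0 : E n) := by
        ext j
        show (if j ∈ Kᶜ then y j else 0) = 0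
        by_cases hj : j ∈ Kᶜ
        · rw [if_pos hj]
          exact le_antisymm (le_trans (hoff j (Finset.mem_compl.mp hj)) hm0.symm.le) (hynn j)
        · rw [if_neg hj]
      rw [hrval, hzero, gauge_zero]
      simpa using hsupR0
    · -- main case
      set m := y i₀ with hmdef
      set y₁ : E n := WithLp.toLp 2 (fun i => if i ∈ K then y i else m : Fin n → ℝ) with hy₁def
      have hy₁K : ∀ i ∈ K, y₁ i = y i := fun i hi => by rw [hy₁def]; exact if_pos hi
      have hy₁off : ∀ i ∉ K, y₁ i = m := fun i hi => by rw [hy₁def]; exact if_neg hi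
      have hsum_comb : ∀ (t : ℝ) (u v : Fin n → ℝ) (A : Finset (Fin n)),
          ∑ i ∈ A, w i * ((1-t) * u i + t * v i)
            = (1-t) * ∑ i ∈ A, w i * u i + t * ∑ i ∈ A, w i * v i := by
        intro t u v A
        rw [Finset.mul_sum, Finset.mul_sum, ← Finset.sum_add_distrib]
        exact Finset.sum_congr rfl fun i _ => by ring
      have hgF : ∑ i ∈ H₀, w i * m - ∑ i ∈ H₀ᶜ, w i * m < 0 := by
        have h1 : ∑ i ∈ H₀, w i * m = (∑ i ∈ H₀, w i) * m := by rw [Finset.sum_mul]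
        have h2 : ∑ i ∈ H₀ᶜ, w i * m = (∑ i ∈ H₀ᶜ, w i) * m := by rw [Finset.sum_mul]
        have h3 := mul_lt_mul_of_pos_right hw hm
        rw [h1, h2]; linarith
      have hg₀ : 0 ≤ ∑ i ∈ H₀, w i * y i - ∑ i ∈ H₀ᶜ, w i * y i := by linarith
      by_cases hg₁ : ∑ i ∈ H₀, w i * y₁ i - ∑ i ∈ H₀ᶜ, w i * y₁ i ≤ 0
      · -- zero-crossing in stage 1
        obtain ⟨t, ht0, ht1, hteq⟩ : ∃ t : ℝ, 0 ≤ t ∧ t ≤ 1 ∧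
            (1-t) * (∑ i ∈ H₀, w i * y i - ∑ i ∈ H₀ᶜ, w i * y i)
              + t * (∑ i ∈ H₀, w i * y₁ i - ∑ i ∈ H₀ᶜ, w i * y₁ i) = 0 := by
          set g₀ := ∑ i ∈ H₀, w i * y i - ∑ i ∈ H₀ᶜ, w i * y i with hg₀def
          set g₁ := ∑ i ∈ H₀, w i * y₁ i - ∑ i ∈ H₀ᶜ, w i * y₁ i with hg₁def
          by_cases hgz : g₀ = 0
          · exact ⟨0, le_refl _, zero_le_one, by rw [hgz]; ring⟩
          · have hgpos : 0 < g₀ := lt_of_le_of_ne hg₀ (Ne.symm hgz)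
            have hden : 0 < g₀ - g₁ := by linarith
            refine ⟨g₀ / (g₀ - g₁), by positivity, ?_, ?_⟩
            · rw [div_le_one hden]; linarith
            · field_simp
              ring
        set z' : E n := WithLp.toLp 2 (fun i => (1-t) * y i + t * y₁ i : Fin n → ℝ) with hz'def
        have hz'K : ∀ i ∈ K, m ≤ z' i ∧ z' i ≤ y i := by
          intro i hi
          have : z' i = y i := by
            show (1-t) * y i + t * y₁ i = y i
            rw [hy₁K i hi]; ring
          rw [this]
          exact ⟨hmin i hi, le_refl _⟩
        have hz'off : ∀ i ∉ K, y i ≤ z' i ∧ z' i ≤ m := by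
          intro i hi
          have h1 : z' i = (1-t) * y i + t * m := by
            show (1-t) * y i + t * y₁ i = _
            rw [hy₁off i hi]
          have h2 : y i ≤ m := hoff i hi
          constructor
          · rw [h1, show (1-t) * y i + t * m = y i + t * (m - y i) from by ring]
            linarith [mul_nonneg ht0 (sub_nonneg.mpr h2)]
          · rw [h1, show (1-t) * y i + t * m = m - (1-t) * (m - y i) from by ring]
            linarith [mul_nonneg (sub_nonneg.mpr ht1) (sub_nonneg.mpr h2)]
        have hmass' : ∑ i ∈ H₀, w i * z' i = ∑ i ∈ H₀ᶜ, w i * z' i := by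
          have hA : ∑ i ∈ H₀, w i * z' i
              = (1-t) * ∑ i ∈ H₀, w i * y i + t * ∑ i ∈ H₀, w i * y₁ i :=
            hsum_comb t y y₁ H₀
          have hB : ∑ i ∈ H₀ᶜ, w i * z' i
              = (1-t) * ∑ i ∈ H₀ᶜ, w i * y i + t * ∑ i ∈ H₀ᶜ, w i * y₁ i :=
            hsum_comb t y y₁ H₀ᶜ
          rw [hA, hB]; linear_combination hteq
        obtain ⟨zs, hzsne, hzsmass, hzsle⟩ :=
          final_step hk hn0 w T hT' H₀ y hynn K hKy m hm z' hz'K hz'off hmass'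
        rw [hrval]
        refine le_trans hzsle ?_
        refine le_csSup hbddR ?_
        exact ⟨zs, hzsne, hzsmass, by rw [atomNormSigma_eq]⟩
      · -- zero-crossing in stage 2
        rw [not_le] at hg₁
        obtain ⟨t, ht0, ht1, hteq⟩ : ∃ t : ℝ, 0 ≤ t ∧ t ≤ 1 ∧
            (1-t) * (∑ i ∈ H₀, w i * y₁ i - ∑ i ∈ H₀ᶜ, w i * y₁ i)
              + t * (∑ i ∈ H₀, w i * m - ∑ i ∈ H₀ᶜ, w i * m) = 0 := by
          set g₁ := ∑ i ∈ H₀, w i * y₁ i - ∑ i ∈ H₀ᶜ, w i * y₁ i with hg₁def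
          set gF := ∑ i ∈ H₀, w i * m - ∑ i ∈ H₀ᶜ, w i * m with hgFdef
          have hden : 0 < g₁ - gF := by linarith
          refine ⟨g₁ / (g₁ - gF), by positivity, ?_, ?_⟩
          · rw [div_le_one hden]; linarith
          · field_simp
            ring
        set z' : E n := WithLp.toLp 2 (fun i => (1-t) * y₁ i + t * m : Fin n → ℝ) with hz'def
        have hz'K : ∀ i ∈ K, m ≤ z' i ∧ z' i ≤ y i := by
          intro i hi
          have h1 : z' i = (1-t) * y i + t * m := by
            show (1-t) * y₁ i + t * m = _
            rw [hy₁K i hi]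
          have h2 : m ≤ y i := hmin i hi
          constructor
          · rw [h1, show (1-t) * y i + t * m = m + (1-t) * (y i - m) from by ring]
            linarith [mul_nonneg (sub_nonneg.mpr ht1) (sub_nonneg.mpr h2)]
          · rw [h1, show (1-t) * y i + t * m = y i - t * (y i - m) from by ring]
            linarith [mul_nonneg ht0 (sub_nonneg.mpr h2)]
        have hz'off : ∀ i ∉ K, y i ≤ z' i ∧ z' i ≤ m := by
          intro i hi
          have h1 : z' i = m := by
            show (1-t) * y₁ i + t * m = m
            rw [hy₁off i hi]; ring
          rw [h1]
          exact ⟨hoff i hi, le_refl _⟩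
        have hmass' : ∑ i ∈ H₀, w i * z' i = ∑ i ∈ H₀ᶜ, w i * z' i := by
          have hA : ∑ i ∈ H₀, w i * z' i
              = (1-t) * ∑ i ∈ H₀, w i * y₁ i + t * ∑ i ∈ H₀, w i * m :=
            hsum_comb t y₁ (fun _ => m) H₀
          have hB : ∑ i ∈ H₀ᶜ, w i * z' i
              = (1-t) * ∑ i ∈ H₀ᶜ, w i * y₁ i + t * ∑ i ∈ H₀ᶜ, w i * m :=
            hsum_comb t y₁ (fun _ => m) H₀ᶜ
          rw [hA, hB]; linear_combination hteq
        have hnum_mono : gauge (convexHull ℝ (Atoms n k)) (coordRestrict y Kᶜ) ^ 2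
            / ∑ i ∈ K, y i ^ 2 ≤ sSup Rset := by
          obtain ⟨zs, hzsne, hzsmass, hzsle⟩ :=
            final_step hk hn0 w T hT' H₀ y hynn K hKy m hm z' hz'K hz'off hmass'
          refine le_trans hzsle (le_csSup hbddR ?_)
          exact ⟨zs, hzsne, hzsmass, by rw [atomNormSigma_eq]⟩
        rw [hrval]
        exact hnum_mono
  · exact csSup_le_csSup hbddL ⟨_, hr₀R⟩ hRL


end
end

section
/- Let k ≥ 1 and L ≥ 1 be integers with k + L ≤ n, and let H₀ ⊆ {1,…,n} be any set of k indices. Then sup{ ‖z_{Tᶜ}‖_Σ²/‖z_T‖₂² : z ∈ ℝⁿ, z ≠ 0, ‖z_{H₀}‖₁ ≥ ‖z_{H₀ᶜ}‖₁, |supp(z)| ≤ k+L } = min(1, L/k). -/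
open scoped BigOperators ENNReal RealInnerProductSpace
open MeasureTheory Metric Pointwise

noncomputable section

section AuxLemmas



variable {n k : ℕ}

def atomSet (n k : ℕ) : Set (EuclideanSpace ℝ (Fin n)) :=
  {u : EuclideanSpace ℝ (Fin n) | u ∈ sparseVecs n k ∧ ‖u‖ = 1}

lemma eunorm_sq (x : EuclideanSpace ℝ (Fin n)) : ‖x‖ ^ 2 = ∑ i, (x i) ^ 2 := by
  rw [EuclideanSpace.norm_eq, Real.sq_sqrt (by positivity)]
  simp [Real.norm_eq_abs, sq_abs]

lemma zero_mem_hull (hn : 0 < n) (hk : 0 < k) :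
    (0 : EuclideanSpace ℝ (Fin n)) ∈ convexHull ℝ (atomSet n k) := by
  have i0 : Fin n := ⟨0, hn⟩
  set a : EuclideanSpace ℝ (Fin n) := EuclideanSpace.single i0 (1:ℝ) with ha
  have hamem : a ∈ atomSet n k := by
    constructor
    · refine ⟨{i0}, by simpa using Nat.succ_le_of_lt hk, fun i hi => ?_⟩
      have hii : i ≠ i0 := by simpa using hi
      simp [ha, EuclideanSpace.single_apply, hii]
    · simpa [ha] using EuclideanSpace.norm_single i0 (1:ℝ)
  have hneg : -a ∈ atomSet n k := by
    obtain ⟨⟨s, hs, h0⟩, hnorm⟩ := hamem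
    exact ⟨⟨s, hs, fun i hi => by simp [h0 i hi]⟩, by simpa using hnorm⟩
  have := (convex_convexHull ℝ (atomSet n k)) (subset_convexHull ℝ _ hamem)
    (subset_convexHull ℝ _ hneg) (by norm_num : (0:ℝ) ≤ 1/2) (by norm_num : (0:ℝ) ≤ 1/2)
    (by norm_num)
  simpa using this

lemma sparse_norm_le_one_mem (hn : 0 < n) (hk : 0 < k)
    {u : EuclideanSpace ℝ (Fin n)} (hu : u ∈ sparseVecs n k) (hnorm : ‖u‖ ≤ 1) :
    u ∈ convexHull ℝ (atomSet n k) := by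
  rcases eq_or_ne u 0 with rfl | hu0
  · exact zero_mem_hull hn hk
  · have hpos : 0 < ‖u‖ := norm_pos_iff.mpr hu0
    have hatom : ‖u‖⁻¹ • u ∈ atomSet n k := by
      constructor
      · obtain ⟨s, hs, h0⟩ := hu
        exact ⟨s, hs, fun i hi => by
          simp [PiLp.smul_apply, h0 i hi]⟩
      · simp [norm_smul, abs_of_pos (inv_pos.mpr hpos), inv_mul_cancel₀ hpos.ne']
    have := (convex_convexHull ℝ (atomSet n k)) (subset_convexHull ℝ _ hatom)
      (zero_mem_hull hn hk) (norm_nonneg u) (by linarith : (0:ℝ) ≤ 1 - ‖u‖) (by ring)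
    simpa [smul_smul, mul_inv_cancel₀ hpos.ne'] using this

lemma atomNormSigma_le_norm (hn : 0 < n) (hk : 0 < k)
    {u : EuclideanSpace ℝ (Fin n)} (hu : u ∈ sparseVecs n k) :
    atomNormSigma n k u ≤ ‖u‖ := by
  rcases eq_or_ne u 0 with rfl | hu0
  · simp [atomNormSigma, gauge_zero]
  · have hpos : 0 < ‖u‖ := norm_pos_iff.mpr hu0
    apply gauge_le_of_mem (norm_nonneg u)
    rw [Set.mem_smul_set_iff_inv_smul_mem₀ hpos.ne']
    apply sparse_norm_le_one_mem hn hk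
    · obtain ⟨s, hs, h0⟩ := hu
      exact ⟨s, hs, fun i hi => by simp [PiLp.smul_apply, h0 i hi]⟩
    · simp [norm_smul, abs_of_pos (inv_pos.mpr hpos), inv_mul_cancel₀ hpos.ne']

lemma hull_subset_ball : convexHull ℝ (atomSet n k) ⊆ closedBall (0:EuclideanSpace ℝ (Fin n)) 1 :=
  convexHull_min (fun u hu => by simp [mem_closedBall, dist_eq_norm, hu.2.le]) (convex_closedBall _ _)

lemma norm_le_atomNormSigma (hn : 0 < n) (hk : 0 < k)
    {u : EuclideanSpace ℝ (Fin n)} (hu : u ∈ sparseVecs n k) :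
    ‖u‖ ≤ atomNormSigma n k u := by
  rcases eq_or_ne u 0 with rfl | hu0
  · simp [atomNormSigma, gauge_zero]
  · have hpos : 0 < ‖u‖ := norm_pos_iff.mpr hu0
    show ‖u‖ ≤ gauge (convexHull ℝ (atomSet n k)) u
    rw [gauge_def]
    have hne : ({r ∈ Set.Ioi (0:ℝ) | u ∈ r • convexHull ℝ (atomSet n k)}).Nonempty := by
      refine ⟨‖u‖, hpos, ?_⟩
      rw [Set.mem_smul_set_iff_inv_smul_mem₀ hpos.ne']
      apply sparse_norm_le_one_mem hn hk
      · obtain ⟨s, hs, h0⟩ := hu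
        exact ⟨s, hs, fun i hi => by simp [PiLp.smul_apply, h0 i hi]⟩
      · simp [norm_smul, abs_of_pos (inv_pos.mpr hpos), inv_mul_cancel₀ hpos.ne']
    refine le_csInf hne ?_
    rintro r ⟨hr, hmem⟩
    replace hr : (0:ℝ) < r := hr
    rw [Set.mem_smul_set_iff_inv_smul_mem₀ hr.ne'] at hmem
    have := hull_subset_ball hmem
    rw [mem_closedBall, dist_zero_right, norm_smul, Real.norm_eq_abs,
      abs_of_pos (inv_pos.mpr hr)] at this
    calc ‖u‖ = r * (r⁻¹ * ‖u‖) := by field_simp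
    _ ≤ r * 1 := by nlinarith
    _ = r := mul_one r

lemma atomNormSigma_eq_norm (hn : 0 < n) (hk : 0 < k)
    {u : EuclideanSpace ℝ (Fin n)} (hu : u ∈ sparseVecs n k) :
    atomNormSigma n k u = ‖u‖ :=
  le_antisymm (atomNormSigma_le_norm hn hk hu) (norm_le_atomNormSigma hn hk hu)


lemma vec_eq_zero {v : EuclideanSpace ℝ (Fin n)} (h : ∀ i, v i = 0) : v = 0 := by
  ext i; simpa using h i

lemma sparse_case_mem (hn : 0 < n) (hk : 0 < k) {μ : ℝ} (hμ : 0 ≤ μ)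
    {v : EuclideanSpace ℝ (Fin n)}
    (hinf : ∀ i, |v i| ≤ μ) (h1 : (∑ i, |v i|) ≤ k * μ)
    (hsupp : (Finset.univ.filter fun i => v i ≠ 0).card ≤ k) :
    v ∈ (Real.sqrt k * μ) • convexHull ℝ (atomSet n k) := by
  rcases eq_or_ne v 0 with rfl | hv0
  · exact ⟨0, zero_mem_hull hn hk, smul_zero _⟩
  have hμpos : 0 < μ := by
    rcases hμ.lt_or_eq with h | h
    · exact h
    · exact absurd (vec_eq_zero fun i =>
        abs_eq_zero.mp (le_antisymm (h ▸ hinf i) (abs_nonneg _))) hv0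
  have hsq : (0:ℝ) < Real.sqrt k := Real.sqrt_pos.mpr (by exact_mod_cast hk)
  have hc : (0:ℝ) < Real.sqrt k * μ := mul_pos hsq hμpos
  have hnorm : ‖v‖ ≤ Real.sqrt k * μ := by
    have h2 : ‖v‖ ^ 2 ≤ (k:ℝ) * μ ^ 2 := by
      rw [eunorm_sq]
      calc ∑ i, (v i) ^ 2 ≤ ∑ i, μ * |v i| := by
            refine Finset.sum_le_sum fun i _ => ?_
            rw [← sq_abs]
            have := hinf i
            nlinarith [abs_nonneg (v i)]
      _ = μ * ∑ i, |v i| := by rw [Finset.mul_sum]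
      _ ≤ μ * (k * μ) := by
            exact mul_le_mul_of_nonneg_left h1 hμ
      _ = (k:ℝ) * μ ^ 2 := by ring
    have hcsq : (Real.sqrt k * μ) ^ 2 = (k:ℝ) * μ ^ 2 := by
      rw [mul_pow, Real.sq_sqrt (by positivity)]
    nlinarith [norm_nonneg v]
  rw [Set.mem_smul_set_iff_inv_smul_mem₀ hc.ne']
  apply sparse_norm_le_one_mem hn hk
  · refine ⟨Finset.univ.filter fun i => v i ≠ 0, hsupp, fun i hi => ?_⟩
    have : v i = 0 := by simpa using hi
    simp [PiLp.smul_apply, this]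
  · rw [norm_smul, Real.norm_eq_abs, abs_of_pos (inv_pos.mpr hc)]
    rw [inv_mul_le_iff₀ hc, mul_one]
    exact hnorm

lemma sum_eq_pair_add {i j : Fin n} (hij : i ≠ j) (f : Fin n → ℝ) :
    ∑ l, f l = f i + f j + ∑ l ∈ (Finset.univ.erase i).erase j, f l := by
  rw [← Finset.add_sum_erase _ f (Finset.mem_univ i),
    ← Finset.add_sum_erase _ f (Finset.mem_erase.mpr ⟨hij.symm, Finset.mem_univ j⟩)]
  ring

lemma sign_mul_abs' (y : ℝ) : Real.sign y * |y| = y := by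
  rcases lt_trichotomy y 0 with h | rfl | h
  · rw [Real.sign_of_neg h, abs_of_neg h]; ring
  · simp
  · rw [Real.sign_of_pos h, abs_of_pos h]; ring

lemma abs_sign_eq_one {y : ℝ} (hy : y ≠ 0) : |Real.sign y| = 1 := by
  rcases lt_or_gt_of_ne hy with h | h
  · simp [Real.sign_of_neg h]
  · simp [Real.sign_of_pos h]

lemma mem_scaled_hull (hn : 0 < n) (hk : 0 < k) {μ : ℝ} (hμ : 0 ≤ μ) :
    ∀ m : ℕ, ∀ v : EuclideanSpace ℝ (Fin n),
      (∀ i, |v i| ≤ μ) → (∑ i, |v i|) ≤ k * μ →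
      (Finset.univ.filter fun i => v i ≠ 0 ∧ |v i| ≠ μ).card ≤ m →
      v ∈ (Real.sqrt k * μ) • convexHull ℝ (atomSet n k) := by
  intro m
  induction m with
  | zero =>
    intro v hinf h1 hbad
    apply sparse_case_mem hn hk hμ hinf h1
    have hall : ∀ i, v i ≠ 0 → |v i| = μ := by
      intro i hi
      by_contra hne
      have : i ∈ Finset.univ.filter fun i => v i ≠ 0 ∧ |v i| ≠ μ := by
        simp [hi, hne]
      have := Finset.card_pos.mpr ⟨i, this⟩
      omega
    rcases hμ.lt_or_eq with hμpos | hμ0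
    · have hsum : (((Finset.univ.filter fun i => v i ≠ 0).card : ℝ)) * μ ≤ (k:ℝ) * μ := by
        calc (((Finset.univ.filter fun i => v i ≠ 0).card : ℝ)) * μ
            = ∑ i ∈ Finset.univ.filter (fun i => v i ≠ 0), |v i| := by
              rw [Finset.sum_congr rfl fun i hi => hall i (by simpa using hi)]
              simp [mul_comm]
          _ ≤ ∑ i, |v i| :=
              Finset.sum_le_sum_of_subset_of_nonneg (Finset.filter_subset _ _)
                (fun i _ _ => abs_nonneg _)
          _ ≤ k * μ := h1
      have := (mul_le_mul_iff_left₀ hμpos).mp hsum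
      exact_mod_cast this
    · have hz : ∀ i, v i = 0 := fun i =>
        abs_eq_zero.mp (le_antisymm (hμ0 ▸ hinf i) (abs_nonneg _))
      have he : (Finset.univ.filter fun i => v i ≠ 0) = ∅ :=
        Finset.filter_eq_empty_iff.mpr fun i _ => by simp [hz i]
      rw [he]
      simp
  | succ m ih =>
    intro v hinf h1 hbad
    by_cases hs : (Finset.univ.filter fun i => v i ≠ 0).card ≤ k
    · exact sparse_case_mem hn hk hμ hinf h1 hs
    push_neg at hs
    -- μ > 0
    have hμpos : 0 < μ := by
      rcases hμ.lt_or_eq with h | h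
      · exact h
      · exfalso
        have : ∀ i, v i = 0 := fun i =>
          abs_eq_zero.mp (le_antisymm (h ▸ hinf i) (abs_nonneg _))
        have : (Finset.univ.filter fun i => v i ≠ 0) = ∅ :=
          Finset.filter_eq_empty_iff.mpr fun i _ => by simp [this i]
        rw [this] at hs; simp at hs
    set F := Finset.univ.filter (fun i => v i ≠ 0 ∧ |v i| ≠ μ) with hF
    set G := Finset.univ.filter (fun i => |v i| = μ) with hGdef
    have hFG : Disjoint F G := by
      rw [Finset.disjoint_left]
      intro a haF haG
      simp only [hF, Finset.mem_filter] at haF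
      simp only [hGdef, Finset.mem_filter] at haG
      exact haF.2.2 haG.2
    have hsuppsub : (Finset.univ.filter fun i => v i ≠ 0) ⊆ F ∪ G := by
      intro i hi
      simp only [Finset.mem_filter, Finset.mem_univ, true_and] at hi
      by_cases h : |v i| = μ
      · exact Finset.mem_union_right _ (by simp [hGdef, h])
      · exact Finset.mem_union_left _ (by simp [hF, hi, h])
    have hGsum : ∑ i ∈ G, |v i| = (G.card : ℝ) * μ := by
      rw [Finset.sum_congr rfl fun i hi => by simpa [hGdef] using hi]
      simp [mul_comm]
    have hGcard : (G.card : ℝ) * μ ≤ (k:ℝ) * μ := by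
      rw [← hGsum]
      calc ∑ i ∈ G, |v i| ≤ ∑ i, |v i| :=
            Finset.sum_le_sum_of_subset_of_nonneg (Finset.filter_subset _ _)
              (fun i _ _ => abs_nonneg _)
        _ ≤ k * μ := h1
    have hGk : G.card ≤ k := by
      have := (mul_le_mul_iff_left₀ hμpos).mp hGcard
      exact_mod_cast this
    have hF2 : 1 < F.card := by
      by_contra hFc
      push_neg at hFc
      have hcards : k + 1 ≤ F.card + G.card :=
        le_trans hs (le_trans (Finset.card_le_card hsuppsub) (Finset.card_union_le _ _))
      have hGk' : G.card = k := by omega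
      have hF1 : F.card = 1 := by omega
      obtain ⟨i₀, hi₀⟩ := Finset.card_pos.mp (by omega : 0 < F.card)
      have hvi₀ : 0 < |v i₀| := by
        simp only [hF, Finset.mem_filter] at hi₀
        exact abs_pos.mpr hi₀.2.1
      have hsum : ∑ i ∈ F ∪ G, |v i| ≤ ∑ i, |v i| :=
        Finset.sum_le_sum_of_subset_of_nonneg (Finset.subset_univ _)
          (fun i _ _ => abs_nonneg _)
      rw [Finset.sum_union hFG] at hsum
      have hFsum : |v i₀| ≤ ∑ i ∈ F, |v i| :=
        Finset.single_le_sum (fun i _ => abs_nonneg (v i)) hi₀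
      rw [hGsum, hGk'] at hsum
      nlinarith
    obtain ⟨i, hiF, j, hjF, hij⟩ := Finset.one_lt_card.mp hF2
    have hvi : 0 < |v i| ∧ |v i| < μ := by
      simp only [hF, Finset.mem_filter] at hiF
      exact ⟨abs_pos.mpr hiF.2.1, lt_of_le_of_ne (hinf i) hiF.2.2⟩
    have hvj : 0 < |v j| ∧ |v j| < μ := by
      simp only [hF, Finset.mem_filter] at hjF
      exact ⟨abs_pos.mpr hjF.2.1, lt_of_le_of_ne (hinf j) hjF.2.2⟩
    have hvi0 : v i ≠ 0 := abs_pos.mp hvi.1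
    have hvj0 : v j ≠ 0 := abs_pos.mp hvj.1
    set t₁ := min (μ - |v i|) (|v j|) with ht₁
    set t₂ := min (|v i|) (μ - |v j|) with ht₂
    have ht₁pos : 0 < t₁ := lt_min (by linarith [hvi.2]) hvj.1
    have ht₂pos : 0 < t₂ := lt_min hvi.1 (by linarith [hvj.2])
    have ht₁le1 : t₁ ≤ μ - |v i| := by rw [ht₁]; exact min_le_left _ _
    have ht₁le2 : t₁ ≤ |v j| := by rw [ht₁]; exact min_le_right _ _
    have ht₂le1 : t₂ ≤ |v i| := by rw [ht₂]; exact min_le_left _ _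
    have ht₂le2 : t₂ ≤ μ - |v j| := by rw [ht₂]; exact min_le_right _ _
    set w₁ : EuclideanSpace ℝ (Fin n) := WithLp.toLp 2 (fun l =>
      if l = i then Real.sign (v i) * (|v i| + t₁)
      else if l = j then Real.sign (v j) * (|v j| - t₁) else v l) with hw₁
    set w₂ : EuclideanSpace ℝ (Fin n) := WithLp.toLp 2 (fun l =>
      if l = i then Real.sign (v i) * (|v i| - t₂)
      else if l = j then Real.sign (v j) * (|v j| + t₂) else v l) with hw₂
    have hw₁i : |w₁ i| = |v i| + t₁ := by
      simp only [hw₁, PiLp.toLp_apply, eq_self_iff_true, if_true, abs_mul, abs_sign_eq_one hvi0, one_mul]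
      rw [abs_of_pos (by linarith [hvi.1])]
    have hw₁j : |w₁ j| = |v j| - t₁ := by
      simp only [hw₁, PiLp.toLp_apply, if_neg hij.symm, eq_self_iff_true, if_true, abs_mul, abs_sign_eq_one hvj0, one_mul]
      rw [abs_of_nonneg (sub_nonneg.mpr ht₁le2)]
    have hw₂i : |w₂ i| = |v i| - t₂ := by
      simp only [hw₂, PiLp.toLp_apply, eq_self_iff_true, if_true, abs_mul, abs_sign_eq_one hvi0, one_mul]
      rw [abs_of_nonneg (sub_nonneg.mpr ht₂le1)]
    have hw₂j : |w₂ j| = |v j| + t₂ := by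
      simp only [hw₂, PiLp.toLp_apply, if_neg hij.symm, eq_self_iff_true, if_true, abs_mul, abs_sign_eq_one hvj0, one_mul]
      rw [abs_of_pos (by linarith [hvj.1])]
    have hw₁other : ∀ l, l ≠ i → l ≠ j → w₁ l = v l := by
      intro l hli hlj
      simp only [hw₁, PiLp.toLp_apply, if_neg hli, if_neg hlj]
    have hw₂other : ∀ l, l ≠ i → l ≠ j → w₂ l = v l := by
      intro l hli hlj
      simp only [hw₂, PiLp.toLp_apply, if_neg hli, if_neg hlj]
    -- ℓ∞ bounds
    have hinf₁ : ∀ l, |w₁ l| ≤ μ := by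
      intro l
      rcases eq_or_ne l i with rfl | hli
      · rw [hw₁i]; linarith
      rcases eq_or_ne l j with rfl | hlj
      · rw [hw₁j]; linarith [hvj.2, ht₁pos]
      · rw [hw₁other l hli hlj]; exact hinf l
    have hinf₂ : ∀ l, |w₂ l| ≤ μ := by
      intro l
      rcases eq_or_ne l i with rfl | hli
      · rw [hw₂i]; linarith [hvi.2, ht₂pos]
      rcases eq_or_ne l j with rfl | hlj
      · rw [hw₂j]; linarith
      · rw [hw₂other l hli hlj]; exact hinf l
    -- ℓ¹ sums
    have hsum₁ : (∑ l, |w₁ l|) = ∑ l, |v l| := by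
      rw [sum_eq_pair_add hij (fun l => |w₁ l|), sum_eq_pair_add hij (fun l => |v l|)]
      rw [Finset.sum_congr rfl fun l hl => by
        rw [hw₁other l (Finset.ne_of_mem_erase (Finset.mem_of_mem_erase hl))
          (Finset.ne_of_mem_erase hl)]]
      rw [hw₁i, hw₁j]; ring
    have hsum₂ : (∑ l, |w₂ l|) = ∑ l, |v l| := by
      rw [sum_eq_pair_add hij (fun l => |w₂ l|), sum_eq_pair_add hij (fun l => |v l|)]
      rw [Finset.sum_congr rfl fun l hl => by
        rw [hw₂other l (Finset.ne_of_mem_erase (Finset.mem_of_mem_erase hl))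
          (Finset.ne_of_mem_erase hl)]]
      rw [hw₂i, hw₂j]; ring
    -- bad set bounds
    have hbadsub : ∀ (w : EuclideanSpace ℝ (Fin n)), (∀ l, l ≠ i → l ≠ j → w l = v l) →
        (∀ l, |w l| ≤ μ) →
        (w i = 0 ∨ |w i| = μ ∨ w j = 0 ∨ |w j| = μ) →
        (Finset.univ.filter fun l => w l ≠ 0 ∧ |w l| ≠ μ).card ≤ m := by
      intro w hother hwinf hcase
      have hsub : ∀ c, c = i ∨ c = j → (w c = 0 ∨ |w c| = μ) →
          (Finset.univ.filter fun l => w l ≠ 0 ∧ |w l| ≠ μ) ⊆ F.erase c := by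
        intro c hc hcgood l hl
        simp only [Finset.mem_filter, Finset.mem_univ, true_and] at hl
        have hlc : l ≠ c := by
          rintro rfl
          rcases hcgood with h | h
          · exact hl.1 h
          · exact hl.2 h
        refine Finset.mem_erase.mpr ⟨hlc, ?_⟩
        rcases eq_or_ne l i with rfl | hli
        · exact hiF
        rcases eq_or_ne l j with rfl | hlj
        · exact hjF
        · rw [hF]
          simp only [Finset.mem_filter, Finset.mem_univ, true_and]
          rw [← hother l hli hlj]
          exact hl
      have hcard : ∀ c, c = i ∨ c = j → (w c = 0 ∨ |w c| = μ) →
          (Finset.univ.filter fun l => w l ≠ 0 ∧ |w l| ≠ μ).card ≤ m := by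
        intro c hc hcgood
        have hcF : c ∈ F := by rcases hc with rfl | rfl; exacts [hiF, hjF]
        calc (Finset.univ.filter fun l => w l ≠ 0 ∧ |w l| ≠ μ).card
            ≤ (F.erase c).card := Finset.card_le_card (hsub c hc hcgood)
          _ = F.card - 1 := Finset.card_erase_of_mem hcF
          _ ≤ m := by omega
      rcases hcase with h | h | h | h
      · exact hcard i (Or.inl rfl) (Or.inl h)
      · exact hcard i (Or.inl rfl) (Or.inr h)
      · exact hcard j (Or.inr rfl) (Or.inl h)
      · exact hcard j (Or.inr rfl) (Or.inr h)
    have hbad₁ : (Finset.univ.filter fun l => w₁ l ≠ 0 ∧ |w₁ l| ≠ μ).card ≤ m := by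
      apply hbadsub w₁ hw₁other hinf₁
      rcases min_cases (μ - |v i|) (|v j|) with ⟨hmin, _⟩ | ⟨hmin, _⟩
      · right; left; rw [hw₁i, ← ht₁] at *; rw [hmin]; ring
      · right; right; left
        have : |w₁ j| = 0 := by rw [hw₁j, ← ht₁] at *; rw [hmin]; ring
        exact abs_eq_zero.mp this
    have hbad₂ : (Finset.univ.filter fun l => w₂ l ≠ 0 ∧ |w₂ l| ≠ μ).card ≤ m := by
      apply hbadsub w₂ hw₂other hinf₂
      rcases min_cases (|v i|) (μ - |v j|) with ⟨hmin, _⟩ | ⟨hmin, _⟩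
      · left
        have : |w₂ i| = 0 := by rw [hw₂i, ← ht₂] at *; rw [hmin]; ring
        exact abs_eq_zero.mp this
      · right; right; right; rw [hw₂j, ← ht₂] at *; rw [hmin]; ring
    -- memberships via IH
    have hm₁ : w₁ ∈ (Real.sqrt k * μ) • convexHull ℝ (atomSet n k) :=
      ih w₁ hinf₁ (hsum₁ ▸ h1) hbad₁
    have hm₂ : w₂ ∈ (Real.sqrt k * μ) • convexHull ℝ (atomSet n k) :=
      ih w₂ hinf₂ (hsum₂ ▸ h1) hbad₂
    -- convex combination
    have htsum : 0 < t₁ + t₂ := by linarith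
    set a := t₂ / (t₁ + t₂) with ha
    set b := t₁ / (t₁ + t₂) with hb
    have hab : a + b = 1 := by rw [ha, hb]; field_simp; ring
    have ha0 : 0 ≤ a := by positivity
    have hb0 : 0 ≤ b := by positivity
    have hab' : a * t₁ - b * t₂ = 0 := by
      rw [ha, hb]; field_simp; ring
    have hcomb : v = a • w₁ + b • w₂ := by
      ext l
      have happ : (a • w₁ + b • w₂) l = a * w₁ l + b * w₂ l := by
        simp [PiLp.add_apply, PiLp.smul_apply]
      rw [happ]
      symm
      rcases eq_or_ne l i with rfl | hli
      · have h1' : w₁ l = Real.sign (v l) * (|v l| + t₁) := by simp [hw₁]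
        have h2' : w₂ l = Real.sign (v l) * (|v l| - t₂) := by simp [hw₂]
        rw [h1', h2']
        have hsgn : Real.sign (v l) * |v l| = v l := sign_mul_abs' (v l)
        calc a * (Real.sign (v l) * (|v l| + t₁)) + b * (Real.sign (v l) * (|v l| - t₂))
            = (a + b) * (Real.sign (v l) * |v l|) + (a * t₁ - b * t₂) * Real.sign (v l) := by
              ring
          _ = v l := by rw [hab, hab', hsgn]; ring
      rcases eq_or_ne l j with rfl | hlj
      · have h1' : w₁ l = Real.sign (v l) * (|v l| - t₁) := by
          simp [hw₁, if_neg hij.symm]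
        have h2' : w₂ l = Real.sign (v l) * (|v l| + t₂) := by
          simp [hw₂, if_neg hij.symm]
        rw [h1', h2']
        have hsgn : Real.sign (v l) * |v l| = v l := sign_mul_abs' (v l)
        calc a * (Real.sign (v l) * (|v l| - t₁)) + b * (Real.sign (v l) * (|v l| + t₂))
            = (a + b) * (Real.sign (v l) * |v l|) - (a * t₁ - b * t₂) * Real.sign (v l) := by
              ring
          _ = v l := by rw [hab, hab', hsgn]; ring
      · rw [hw₁other l hli hlj, hw₂other l hli hlj]
        calc a * v l + b * v l = (a + b) * v l := by ring
          _ = v l := by rw [hab]; ring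
    rw [hcomb]
    have hCconv : Convex ℝ ((Real.sqrt k * μ) • convexHull ℝ (atomSet n k)) :=
      (convex_convexHull ℝ (atomSet n k)).smul _
    exact hCconv hm₁ hm₂ ha0 hb0 hab

lemma atomNormSigma_le_sqrt (hn : 0 < n) (hk : 0 < k) {μ : ℝ} (hμ : 0 ≤ μ)
    (v : EuclideanSpace ℝ (Fin n))
    (hinf : ∀ i, |v i| ≤ μ) (h1 : (∑ i, |v i|) ≤ k * μ) :
    atomNormSigma n k v ≤ Real.sqrt k * μ := by
  have hcard : (Finset.univ.filter fun i => v i ≠ 0 ∧ |v i| ≠ μ).card ≤ n :=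
    le_trans (Finset.card_filter_le _ _)
      (le_of_eq (by rw [Finset.card_univ, Fintype.card_fin]))
  exact gauge_le_of_mem (mul_nonneg (Real.sqrt_nonneg _) hμ)
    (mem_scaled_hull hn hk hμ n v hinf h1 hcard)


end AuxLemmas

set_option maxHeartbeats 2000000 in
/-- Lemma 11 of the paper, exact value `min(1, L/k)` of the constrained supremum
`D_L(‖·‖₁)` for the ℓ¹-norm. `T` picks, for each `z`, `k` indices carrying the `k` largest
absolute values of coordinates of `z`. -/
theorem DL_l1_eq_min
    (n k L : ℕ) (hk : 1 ≤ k) (hL : 1 ≤ L) (hn : k + L ≤ n)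
    (T : EuclideanSpace ℝ (Fin n) → Finset (Fin n))
    (hT : ∀ z, (T z).card = k ∧ ∀ i ∈ T z, ∀ j ∉ T z, |z j| ≤ |z i|)
    (H₀ : Finset (Fin n)) (hH₀card : H₀.card = k) :
    sSup {r : ℝ | ∃ z : EuclideanSpace ℝ (Fin n), z ≠ 0 ∧
        (∑ i ∈ H₀ᶜ, |z i|) ≤ (∑ i ∈ H₀, |z i|) ∧
        (Finset.univ.filter fun i => z i ≠ 0).card ≤ k + L ∧
        r = (atomNormSigma n k (coordRestrict z (T z)ᶜ)) ^ 2 / ‖coordRestrict z (T z)‖ ^ 2}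
      = min 1 ((L : ℝ) / k) := by
  have hn0 : 0 < n := by omega
  have hk0 : 0 < k := hk
  have hkR : (0:ℝ) < k := by exact_mod_cast hk0
  -- UPPER BOUND
  have hub : ∀ r ∈ {r : ℝ | ∃ z : EuclideanSpace ℝ (Fin n), z ≠ 0 ∧
        (∑ i ∈ H₀ᶜ, |z i|) ≤ (∑ i ∈ H₀, |z i|) ∧
        (Finset.univ.filter fun i => z i ≠ 0).card ≤ k + L ∧
        r = (atomNormSigma n k (coordRestrict z (T z)ᶜ)) ^ 2 / ‖coordRestrict z (T z)‖ ^ 2},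
      r ≤ min 1 ((L : ℝ) / k) := by
    rintro r ⟨z, hz0, hcone, hsupp, rfl⟩
    obtain ⟨hTcard, hTmax⟩ := hT z
    set S := T z with hS
    set w := coordRestrict z S with hw
    set v := coordRestrict z Sᶜ with hv
    have hwapp : ∀ l, w l = if l ∈ S then z l else 0 := fun l => rfl
    have hvapp : ∀ l, v l = if l ∈ S then 0 else z l := by
      intro l
      show (if l ∈ Sᶜ then z l else 0) = _
      by_cases hl : l ∈ S <;> simp [hl]
    obtain ⟨i₀, hi₀S, hi₀min⟩ :=
      S.exists_min_image (fun i => |z i|) (Finset.card_pos.mp (by omega))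
    set μ := |z i₀| with hμdef
    have hμ0 : (0:ℝ) ≤ μ := abs_nonneg _
    have hout : ∀ j, j ∉ S → |z j| ≤ μ := fun j hj => hTmax i₀ hi₀S j hj
    have hvle : ∀ l, |v l| ≤ μ := by
      intro l
      rw [hvapp l]
      by_cases hl : l ∈ S
      · simp [hl, hμ0]
      · simpa [hl] using hout l hl
    have hwsq : ‖w‖ ^ 2 = ∑ i ∈ S, (z i) ^ 2 := by
      rw [eunorm_sq]
      rw [show ∑ l, (w l)^2 = ∑ l, (if l ∈ S then (z l)^2 else 0) from
        Finset.sum_congr rfl fun l _ => by rw [hwapp l]; split_ifs <;> simp]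
      rw [Finset.sum_ite_mem, Finset.univ_inter]
    have hvsum : (∑ l, |v l|) = ∑ l ∈ Sᶜ, |z l| := by
      rw [show ∑ l, |v l| = ∑ l, (if l ∈ Sᶜ then |z l| else 0) from
        Finset.sum_congr rfl fun l _ => by
          rw [hvapp l]; by_cases hl : l ∈ S <;> simp [hl]]
      rw [Finset.sum_ite_mem, Finset.univ_inter]
    have hwge : (k:ℝ) * μ ^ 2 ≤ ‖w‖ ^ 2 := by
      rw [hwsq]
      calc (k:ℝ) * μ ^ 2 = ∑ _i ∈ S, μ ^ 2 := by
            rw [Finset.sum_const, hTcard, nsmul_eq_mul]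
        _ ≤ ∑ i ∈ S, (z i)^2 := by
            refine Finset.sum_le_sum fun i hi => ?_
            have h1 := hi₀min i hi
            have h2 : μ ^ 2 ≤ |z i| ^ 2 := by nlinarith [abs_nonneg (z i)]
            simpa [sq_abs] using h2
    have hwpos : (0:ℝ) < ‖w‖ ^ 2 := by
      have hex : ∃ i ∈ S, z i ≠ 0 := by
        by_contra hc
        push_neg at hc
        apply hz0
        apply vec_eq_zero
        intro l
        by_cases hl : l ∈ S
        · exact hc l hl
        · have : |z l| ≤ μ := hout l hl
          have : μ = 0 := by simp [hμdef, hc i₀ hi₀S]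
          have h2 : |z l| ≤ 0 := by rw [← this]; exact hout l hl
          exact abs_eq_zero.mp (le_antisymm h2 (abs_nonneg _))
      obtain ⟨i₁, hi₁S, hi₁⟩ := hex
      rw [hwsq]
      have : (0:ℝ) < (z i₁)^2 := by positivity
      exact lt_of_lt_of_le this
        (Finset.single_le_sum (fun i _ => sq_nonneg (z i)) hi₁S)
    have hwpos' : (0:ℝ) < ‖w‖ := by
      by_contra h
      push_neg at h
      nlinarith [norm_nonneg w]
    set a := atomNormSigma n k v with haDef
    have ha0 : 0 ≤ a := gauge_nonneg _
    -- support bound on v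
    rcases eq_or_ne v 0 with hveq | hvne
    · have haz : a = 0 := by rw [haDef, hveq]; exact gauge_zero
      rw [haz]
      have h0 : (0:ℝ)^2 / ‖w‖^2 = 0 := by norm_num
      rw [h0]
      exact le_min zero_le_one (by positivity)
    have hvsupp : (Finset.univ.filter fun l => v l ≠ 0).card ≤ L := by
      obtain ⟨l₀, hl₀⟩ : ∃ l, v l ≠ 0 := by
        by_contra hc; push_neg at hc; exact hvne (vec_eq_zero hc)
      have hl₀S : l₀ ∉ S := by
        intro h; rw [hvapp l₀] at hl₀; simp [h] at hl₀
      have hzl₀ : z l₀ ≠ 0 := by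
        rw [hvapp l₀, if_neg hl₀S] at hl₀; exact hl₀
      have hSsub : S ⊆ Finset.univ.filter fun l => z l ≠ 0 := by
        intro i hi
        simp only [Finset.mem_filter, Finset.mem_univ, true_and]
        have := hTmax i hi l₀ hl₀S
        have hp : 0 < |z l₀| := abs_pos.mpr hzl₀
        intro h0
        rw [h0, abs_zero] at this
        linarith
      have heq : (Finset.univ.filter fun l => v l ≠ 0)
          = (Finset.univ.filter fun l => z l ≠ 0) \ S := by
        ext l
        simp only [Finset.mem_filter, Finset.mem_univ, true_and, Finset.mem_sdiff]
        rw [hvapp l]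
        by_cases hl : l ∈ S <;> simp [hl]
      rw [heq, Finset.card_sdiff_of_subset hSsub, hTcard]
      omega
    by_cases hLk : L ≤ k
    · -- ratio ≤ L/k case
      have hmin : min 1 ((L:ℝ)/k) = (L:ℝ)/k := by
        rw [min_eq_right]
        rw [div_le_one hkR]
        exact_mod_cast hLk
      rw [hmin]
      have hvsparse : v ∈ sparseVecs n k := by
        refine ⟨Finset.univ.filter fun l => v l ≠ 0, le_trans hvsupp hLk, fun i hi => ?_⟩
        simpa using hi
      have hanorm : a ≤ ‖v‖ := atomNormSigma_le_norm hn0 hk0 hvsparse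
      have hvsq : ‖v‖ ^ 2 ≤ (L:ℝ) * μ ^ 2 := by
        rw [eunorm_sq]
        have hstep : ∑ l, (v l)^2 = ∑ l ∈ Finset.univ.filter (fun l => v l ≠ 0), (v l)^2 := by
          symm
          apply Finset.sum_subset (Finset.filter_subset _ _)
          intro x _ hx
          simp only [Finset.mem_filter, Finset.mem_univ, true_and, not_not] at hx
          simp [hx]
        rw [hstep]
        calc ∑ l ∈ Finset.univ.filter (fun l => v l ≠ 0), (v l)^2
            ≤ ∑ _l ∈ Finset.univ.filter (fun l => v l ≠ 0), μ ^ 2 := by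
              refine Finset.sum_le_sum fun l _ => ?_
              have := hvle l
              nlinarith [abs_nonneg (v l), sq_abs (v l)]
          _ = ((Finset.univ.filter fun l => v l ≠ 0).card : ℝ) * μ ^ 2 := by
              rw [Finset.sum_const, nsmul_eq_mul]
          _ ≤ (L:ℝ) * μ ^ 2 := by
              have : ((Finset.univ.filter fun l => v l ≠ 0).card : ℝ) ≤ (L:ℝ) := by
                exact_mod_cast hvsupp
              nlinarith [sq_nonneg μ]
      have hasq : a ^ 2 ≤ (L:ℝ) * μ ^ 2 := by
        have h2 : a ^ 2 ≤ ‖v‖ ^ 2 := by nlinarith [norm_nonneg v]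
        linarith
      rw [div_le_div_iff₀ hwpos hkR]
      calc a ^ 2 * k ≤ ((L:ℝ) * μ ^ 2) * k := by nlinarith
        _ = (L:ℝ) * ((k:ℝ) * μ ^ 2) := by ring
        _ ≤ (L:ℝ) * ‖w‖ ^ 2 := by
            have : (0:ℝ) ≤ L := by positivity
            nlinarith
    · -- ratio ≤ 1 case
      rw [not_le] at hLk
      have hmin : min 1 ((L:ℝ)/k) = 1 := by
        rw [min_eq_left]
        rw [le_div_iff₀ hkR, one_mul]
        exact_mod_cast hLk.le
      rw [hmin]
      -- l1 comparison
      set W1 := ∑ i ∈ S, |z i| with hW1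
      set V1 := ∑ l, |v l| with hV1
      have hexch : ∑ i ∈ H₀, |z i| ≤ W1 := by
        have e1 : ∑ i ∈ H₀ ∩ S, |z i| + ∑ i ∈ H₀ \ S, |z i| = ∑ i ∈ H₀, |z i| :=
          Finset.sum_inter_add_sum_sdiff H₀ S _
        have e2 : ∑ i ∈ S ∩ H₀, |z i| + ∑ i ∈ S \ H₀, |z i| = W1 :=
          Finset.sum_inter_add_sum_sdiff S H₀ _
        have hcards : (H₀ \ S).card = (S \ H₀).card := by
          have c1 := Finset.card_sdiff_add_card_inter H₀ S
          have c2 := Finset.card_sdiff_add_card_inter S H₀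
          rw [Finset.inter_comm] at c2
          omega
        have hle : ∑ i ∈ H₀ \ S, |z i| ≤ ∑ i ∈ S \ H₀, |z i| := by
          calc ∑ i ∈ H₀ \ S, |z i| ≤ (H₀ \ S).card • μ := by
                refine Finset.sum_le_card_nsmul _ _ _ fun i hi => ?_
                exact hout i (Finset.mem_sdiff.mp hi).2
            _ = (S \ H₀).card • μ := by rw [hcards]
            _ ≤ ∑ i ∈ S \ H₀, |z i| := by
                refine Finset.card_nsmul_le_sum _ _ _ fun i hi => ?_
                exact hi₀min i (Finset.mem_sdiff.mp hi).1
        have e3 : ∑ i ∈ H₀ ∩ S, |z i| = ∑ i ∈ S ∩ H₀, |z i| := by rw [Finset.inter_comm]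
        linarith
      have hVW : V1 ≤ W1 := by
        have t1 : ∑ i ∈ S, |z i| + ∑ i ∈ Sᶜ, |z i| = ∑ i, |z i| :=
          Finset.sum_add_sum_compl S _
        have t2 : ∑ i ∈ H₀, |z i| + ∑ i ∈ H₀ᶜ, |z i| = ∑ i, |z i| :=
          Finset.sum_add_sum_compl H₀ _
        have : ∑ i ∈ Sᶜ, |z i| ≤ ∑ i ∈ H₀ᶜ, |z i| := by linarith
        calc V1 = ∑ i ∈ Sᶜ, |z i| := hvsum
          _ ≤ ∑ i ∈ H₀ᶜ, |z i| := this
          _ ≤ ∑ i ∈ H₀, |z i| := hcone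
          _ ≤ W1 := hexch
      have hW1sq : W1 ^ 2 ≤ (k:ℝ) * ‖w‖ ^ 2 := by
        rw [hwsq]
        have := sq_sum_le_card_mul_sum_sq (s := S) (f := fun i => |z i|)
        rw [hTcard] at this
        calc W1 ^ 2 ≤ (k:ℝ) * ∑ i ∈ S, |z i| ^ 2 := by exact_mod_cast this
          _ = (k:ℝ) * ∑ i ∈ S, (z i) ^ 2 := by
              congr 1
              exact Finset.sum_congr rfl fun i _ => sq_abs (z i)
      set μ' := max μ (V1 / k) with hμ'
      have hμ'0 : 0 ≤ μ' := le_trans hμ0 (le_max_left _ _)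
      have haup : a ≤ Real.sqrt k * μ' := by
        apply atomNormSigma_le_sqrt hn0 hk0 hμ'0
        · exact fun l => le_trans (hvle l) (le_max_left _ _)
        · calc (∑ l, |v l|) = V1 := rfl
            _ = (k:ℝ) * (V1 / k) := by field_simp
            _ ≤ (k:ℝ) * μ' := by
                have := le_max_right μ (V1/k)
                nlinarith
      have hV10 : 0 ≤ V1 := Finset.sum_nonneg fun l _ => abs_nonneg _
      have hsqle : (Real.sqrt k * μ') ^ 2 ≤ ‖w‖ ^ 2 := by
        have hsk : (Real.sqrt k) ^ 2 = (k:ℝ) := Real.sq_sqrt (by positivity)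
        rcases max_cases μ (V1 / k) with ⟨hm, _⟩ | ⟨hm, _⟩
        · rw [hμ', hm, mul_pow, hsk]
          exact hwge
        · rw [hμ', hm, mul_pow, hsk]
          calc (k:ℝ) * (V1 / k) ^ 2 = V1 ^ 2 / k := by field_simp
            _ ≤ W1 ^ 2 / k := by
                have hVW2 : V1 ^ 2 ≤ W1 ^ 2 := by nlinarith
                gcongr
            _ ≤ ‖w‖ ^ 2 := by
                rw [div_le_iff₀ hkR]
                linarith [hW1sq]
      have hfin : a ≤ ‖w‖ := by
        have h1 : a ≤ Real.sqrt k * μ' := haup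
        nlinarith [norm_nonneg w, Real.sqrt_nonneg (k:ℝ), hμ'0]
      rw [div_le_one hwpos]
      nlinarith
  -- LOWER BOUND (membership)
  have hmem : min 1 ((L:ℝ)/k) ∈ {r : ℝ | ∃ z : EuclideanSpace ℝ (Fin n), z ≠ 0 ∧
        (∑ i ∈ H₀ᶜ, |z i|) ≤ (∑ i ∈ H₀, |z i|) ∧
        (Finset.univ.filter fun i => z i ≠ 0).card ≤ k + L ∧
        r = (atomNormSigma n k (coordRestrict z (T z)ᶜ)) ^ 2 / ‖coordRestrict z (T z)‖ ^ 2} := by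
    set M := min k L with hM
    have hM1 : 1 ≤ M := le_min hk hL
    have hMk : M ≤ k := min_le_left _ _
    have hML : M ≤ L := min_le_right _ _
    have hcompl : M ≤ H₀ᶜ.card := by
      rw [Finset.card_compl, Fintype.card_fin, hH₀card]
      omega
    obtain ⟨E, hEsub, hEcard⟩ := Finset.exists_subset_card_eq hcompl
    have hdisj : Disjoint H₀ E := by
      rw [Finset.disjoint_right]
      intro a haE haH
      exact (Finset.mem_compl.mp (hEsub haE)) haH
    set U := H₀ ∪ E with hU
    have hUcard : U.card = k + M := by
      rw [hU, Finset.card_union_of_disjoint hdisj, hH₀card, hEcard]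
    set z : EuclideanSpace ℝ (Fin n) := WithLp.toLp 2 (fun l => if l ∈ U then (1:ℝ) else 0) with hz
    have hzapp : ∀ l, z l = if l ∈ U then (1:ℝ) else 0 := fun l => rfl
    have habs : ∀ l, |z l| = if l ∈ U then (1:ℝ) else 0 := by
      intro l; rw [hzapp l]; split_ifs <;> simp
    have hzne : ∀ l, z l ≠ 0 ↔ l ∈ U := by
      intro l; rw [hzapp l]; split_ifs with h <;> simp [h]
    obtain ⟨i₀, hi₀⟩ := Finset.card_pos.mp (show 0 < H₀.card by omega)
    have hi₀U : i₀ ∈ U := Finset.mem_union_left _ hi₀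
    have hz0 : z ≠ 0 := by
      intro h
      have : z i₀ = 0 := by rw [h]; rfl
      rw [hzapp i₀, if_pos hi₀U] at this
      norm_num at this
    have hsum_ite : ∀ s : Finset (Fin n), (∑ i ∈ s, |z i|) = ((s ∩ U).card : ℝ) := by
      intro s
      rw [Finset.sum_congr rfl fun i _ => habs i, Finset.sum_ite_mem, Finset.sum_const,
        nsmul_eq_mul, mul_one]
    have hcone : (∑ i ∈ H₀ᶜ, |z i|) ≤ (∑ i ∈ H₀, |z i|) := by
      rw [hsum_ite, hsum_ite]
      have h1 : H₀ᶜ ∩ U = E := by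
        ext l
        simp only [Finset.mem_inter, Finset.mem_compl, hU, Finset.mem_union]
        constructor
        · rintro ⟨hl, hl2 | hl2⟩
          · exact absurd hl2 hl
          · exact hl2
        · intro hl
          exact ⟨Finset.mem_compl.mp (hEsub hl), Or.inr hl⟩
      have h2 : H₀ ∩ U = H₀ := by
        rw [Finset.inter_eq_left]
        exact Finset.subset_union_left
      rw [h1, h2, hEcard, hH₀card]
      exact_mod_cast hMk
    have hsuppz : (Finset.univ.filter fun i => z i ≠ 0) = U := by
      ext l
      simp only [Finset.mem_filter, Finset.mem_univ, true_and]
      exact hzne l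
    have hsuppcard : (Finset.univ.filter fun i => z i ≠ 0).card ≤ k + L := by
      rw [hsuppz, hUcard]; omega
    refine ⟨z, hz0, hcone, hsuppcard, ?_⟩
    obtain ⟨hTcard, hTmax⟩ := hT z
    set S := T z with hS
    have hSsub : S ⊆ U := by
      have hlt : ¬ U ⊆ S := by
        intro hsub
        have := Finset.card_le_card hsub
        rw [hTcard, hUcard] at this
        omega
      obtain ⟨l₀, hl₀U, hl₀S⟩ := Finset.not_subset.mp hlt
      intro i hiS
      have h1 := hTmax i hiS l₀ hl₀S
      rw [habs l₀, if_pos hl₀U] at h1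
      have : z i ≠ 0 := by
        intro h0
        rw [h0, abs_zero] at h1
        linarith
      exact (hzne i).mp this
    set w := coordRestrict z S with hw
    set v := coordRestrict z Sᶜ with hv
    have hwapp : ∀ l, w l = if l ∈ S then (1:ℝ) else 0 := by
      intro l
      show (if l ∈ S then z l else 0) = _
      by_cases hl : l ∈ S
      · rw [if_pos hl, if_pos hl, hzapp l, if_pos (hSsub hl)]
      · rw [if_neg hl, if_neg hl]
    have hvapp : ∀ l, v l = if l ∈ U \ S then (1:ℝ) else 0 := by
      intro l
      show (if l ∈ Sᶜ then z l else 0) = _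
      by_cases hl : l ∈ S
      · rw [if_neg (by simpa using hl), if_neg (by simp [hl])]
      · rw [if_pos (by simpa using hl), hzapp l]
        by_cases hlU : l ∈ U
        · rw [if_pos hlU, if_pos (Finset.mem_sdiff.mpr ⟨hlU, hl⟩)]
        · rw [if_neg hlU, if_neg (by simp [hlU])]
    have hwnorm : ‖w‖ ^ 2 = (k:ℝ) := by
      rw [eunorm_sq]
      have hstep : ∑ l, (w l)^2 = ∑ l, (if l ∈ S then (1:ℝ) else 0) := by
        refine Finset.sum_congr rfl fun l _ => ?_
        rw [hwapp l]; split_ifs <;> norm_num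
      rw [hstep, Finset.sum_ite_mem, Finset.univ_inter, Finset.sum_const, nsmul_eq_mul,
        mul_one, hTcard]
    have hvnorm : ‖v‖ ^ 2 = (M:ℝ) := by
      rw [eunorm_sq]
      have hstep : ∑ l, (v l)^2 = ∑ l, (if l ∈ U \ S then (1:ℝ) else 0) := by
        refine Finset.sum_congr rfl fun l _ => ?_
        rw [hvapp l]; split_ifs <;> norm_num
      rw [hstep, Finset.sum_ite_mem, Finset.univ_inter, Finset.sum_const, nsmul_eq_mul,
        mul_one]
      have : (U \ S).card = M := by
        rw [Finset.card_sdiff_of_subset hSsub, hUcard, hTcard]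
        omega
      rw [this]
    have hvsparse : v ∈ sparseVecs n k := by
      refine ⟨U \ S, by rw [Finset.card_sdiff_of_subset hSsub, hUcard, hTcard]; omega, fun l hl => ?_⟩
      rw [hvapp l, if_neg hl]
    have hvnormsig : atomNormSigma n k v = ‖v‖ := atomNormSigma_eq_norm hn0 hk0 hvsparse
    rw [hvnormsig, hvnorm, hwnorm]
    rw [hM]
    have hcast : ((min k L : ℕ) : ℝ) = min (k:ℝ) (L:ℝ) := Nat.cast_min k L
    rw [hcast]
    rw [← min_div_div_right (le_of_lt hkR), div_self (ne_of_gt hkR)]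
  refine le_antisymm (csSup_le ⟨_, hmem⟩ hub) (le_csSup ⟨_, hub⟩ hmem)

end
end

section
/- Let k ≥ 1, let w ∈ ℝⁿ be a weight vector with w_i > 0 and max_i w_i = 1, let H₀ be a set of k indices carrying k largest weights of w, let L ≥ 1 be an integer with k + L ≤ n, and let H₁ be a set of L indices carrying L smallest weights of w (disjoint from H₀). (i) If L ≥ k and ‖w_{H₀}‖₁ < ‖w_{H₁}‖₁, then sup{ ‖z_{Tᶜ}‖_Σ²/‖z_T‖₂² : z ∈ ℝⁿ, z ≠ 0, ‖z_{H₀}‖_w = ‖z_{H₀ᶜ}‖_w, |supp(z)| = k+L } ≥ (L²/k) / ( k·‖w_{H₁}‖₁²/‖w_{H₀}‖₁² ) = L²‖w_{H₀}‖₁² / (k²‖w_{H₁}‖₁²). (ii) If L ≤ k, then sup{ ‖z_{Tᶜ}‖_Σ²/‖z_T‖₂² : z ∈ ℝⁿ, z ≠ 0, ‖z_{H₀}‖_w ≥ ‖z_{H₀ᶜ}‖_w, supp(z) ⊆ H₀ ∪ H₁ } ≥ L/k. -/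
open scoped BigOperators ENNReal RealInnerProductSpace
open MeasureTheory Metric
open scoped Pointwise

noncomputable section

variable {n k : ℕ}

lemma atomS_single_mem (hk : 1 ≤ k) (i : Fin n) (c : ℝ) (hc : |c| = 1) :
    (c • EuclideanSpace.single i (1:ℝ)) ∈
      {u : EuclideanSpace ℝ (Fin n) | u ∈ sparseVecs n k ∧ ‖u‖ = 1} := by
  constructor
  · exact ⟨{i}, by simpa using hk, fun j hj => by
      simp only [PiLp.smul_apply, EuclideanSpace.single_apply, smul_eq_mul]
      rw [if_neg (by simpa using hj)]; ring⟩
  · rw [norm_smul, EuclideanSpace.norm_single]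
    simp [Real.norm_eq_abs, hc]

lemma mem_smul_l1 (hk : 1 ≤ k) (v : EuclideanSpace ℝ (Fin n)) (hv : v ≠ 0) :
    v ∈ (∑ i, |v i|) • convexHull ℝ
      {u : EuclideanSpace ℝ (Fin n) | u ∈ sparseVecs n k ∧ ‖u‖ = 1} := by
  set a : ℝ := ∑ i, |v i| with ha_def
  have ha : 0 < a := by
    have : ∃ i, v i ≠ 0 := by
      by_contra h
      push_neg at h
      exact hv (by ext i; simp [h i])
    obtain ⟨i, hi⟩ := this
    refine Finset.sum_pos' (fun j _ => abs_nonneg _) ⟨i, Finset.mem_univ i, abs_pos.2 hi⟩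
  rw [Set.mem_smul_set_iff_inv_smul_mem₀ ha.ne']
  have key : a⁻¹ • v = ∑ i ∈ Finset.univ.filter (fun i => v i ≠ 0),
      (|v i| / a) • ((v i / |v i|) • EuclideanSpace.single i (1:ℝ)) := by
    ext j
    rw [WithLp.ofLp_sum, Finset.sum_apply]
    simp only [PiLp.smul_apply, EuclideanSpace.single_apply, smul_eq_mul]
    rw [Finset.sum_eq_single j]
    · by_cases h : v j = 0
      · simp [h]
      · have habs : |v j| ≠ 0 := abs_ne_zero.2 h
        rw [if_pos rfl, mul_one]
        field_simp
    · intro b _ hbj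
      simp [if_neg (Ne.symm hbj)]
    · intro hj
      simp only [Finset.mem_filter, Finset.mem_univ, true_and, not_not] at hj
      simp [hj]
  rw [key]
  refine (convex_convexHull ℝ _).sum_mem (fun i _ => by positivity) ?_ ?_
  · rw [← Finset.sum_div, Finset.sum_filter_of_ne (fun x _ hx => abs_ne_zero.1 hx),
      div_self ha.ne']
  · intro i hi
    rw [Finset.mem_filter] at hi
    exact subset_convexHull ℝ _ (atomS_single_mem hk i _ (by rw [abs_div, abs_abs, div_self (abs_ne_zero.2 hi.2)]))

lemma sum_abs_nonneg' (v : EuclideanSpace ℝ (Fin n)) : (0:ℝ) ≤ ∑ i, |v i| :=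
  Finset.sum_nonneg fun i _ => abs_nonneg _

lemma sum_abs_pos' (v : EuclideanSpace ℝ (Fin n)) (hv : v ≠ 0) : (0:ℝ) < ∑ i, |v i| := by
  have : ∃ i, v i ≠ 0 := by
    by_contra h; push_neg at h; exact hv (by ext i; simp [h i])
  obtain ⟨i, hi⟩ := this
  exact Finset.sum_pos' (fun j _ => abs_nonneg _) ⟨i, Finset.mem_univ i, abs_pos.2 hi⟩

lemma atom_le_l1 (hk : 1 ≤ k) (v : EuclideanSpace ℝ (Fin n)) :
    atomNormSigma n k v ≤ ∑ i, |v i| := by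
  by_cases hv : v = 0
  · simp [hv, atomNormSigma, gauge_zero]
  · exact gauge_le_of_mem (sum_abs_nonneg' v) (mem_smul_l1 hk v hv)

lemma hull_subset_closedBall :
    convexHull ℝ {u : EuclideanSpace ℝ (Fin n) | u ∈ sparseVecs n k ∧ ‖u‖ = 1}
      ⊆ Metric.closedBall (0 : EuclideanSpace ℝ (Fin n)) 1 :=
  convexHull_min (fun u hu => by
    simp only [Metric.mem_closedBall, dist_zero_right]; exact le_of_eq hu.2)
    (convex_closedBall _ _)

lemma l2_le_atom (hk : 1 ≤ k) (v : EuclideanSpace ℝ (Fin n)) :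
    ‖v‖ ≤ atomNormSigma n k v := by
  by_cases hv : v = 0
  · simp [hv, atomNormSigma, gauge_zero]
  · rw [atomNormSigma, gauge_def]
    refine le_csInf ⟨∑ i, |v i|, Set.mem_Ioi.2 (sum_abs_pos' v hv), mem_smul_l1 hk v hv⟩ ?_
    rintro b ⟨hb, hmem⟩
    obtain ⟨c, hc, rfl⟩ := hmem
    have hc1 : ‖c‖ ≤ 1 := by
      have := hull_subset_closedBall (k := k) hc
      simpa [Metric.mem_closedBall, dist_zero_right] using this
    rw [norm_smul, Real.norm_eq_abs, abs_of_pos (Set.mem_Ioi.1 hb)]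
    nlinarith [Set.mem_Ioi.1 hb, norm_nonneg c]

lemma hull_l1_le (hk : 1 ≤ k) {c : EuclideanSpace ℝ (Fin n)}
    (hc : c ∈ convexHull ℝ {u : EuclideanSpace ℝ (Fin n) | u ∈ sparseVecs n k ∧ ‖u‖ = 1}) :
    ∑ i, |c i| ≤ Real.sqrt k := by
  have hsub : {u : EuclideanSpace ℝ (Fin n) | u ∈ sparseVecs n k ∧ ‖u‖ = 1}
      ⊆ {x : EuclideanSpace ℝ (Fin n) | ∑ i, |x i| ≤ Real.sqrt k} := by
    rintro u ⟨⟨s, hsk, h0⟩, hnorm⟩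
    have hus : ∑ i, |u i| = ∑ i ∈ s, |u i| := by
      rw [← Finset.sum_subset (Finset.subset_univ s)]
      intro i _ hi; simp [h0 i hi]
    have hsq : (∑ i ∈ s, |u i|) ^ 2 ≤ (s.card : ℝ) * ∑ i ∈ s, |u i| ^ 2 := by
      exact sq_sum_le_card_mul_sum_sq
    have hnorm2 : ∑ i, (u i) ^ 2 = 1 := by
      have h1 : ‖u‖ ^ 2 = ∑ i, ‖u i‖ ^ 2 := by
        rw [EuclideanSpace.norm_eq, Real.sq_sqrt (by positivity)]
      simp only [Real.norm_eq_abs, sq_abs] at h1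
      rw [← h1, hnorm]; norm_num
    have h2 : ∑ i ∈ s, |u i| ^ 2 ≤ 1 := by
      rw [← hnorm2]
      refine Finset.sum_le_sum_of_subset_of_nonneg (Finset.subset_univ s) (fun i _ _ => sq_nonneg _) |>.trans_eq ?_
      simp [sq_abs]
    show ∑ i, |u i| ≤ Real.sqrt k
    rw [hus]
    refine (Real.le_sqrt (Finset.sum_nonneg fun i _ => abs_nonneg _) (by positivity)).2 ?_
    calc (∑ i ∈ s, |u i|) ^ 2 ≤ (s.card : ℝ) * ∑ i ∈ s, |u i| ^ 2 := hsq
      _ ≤ (k : ℝ) * 1 := by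
          refine mul_le_mul (by exact_mod_cast hsk) h2 (Finset.sum_nonneg fun i _ => sq_nonneg _) (by positivity)
      _ = (k : ℝ) := mul_one _
  have hconv : Convex ℝ {x : EuclideanSpace ℝ (Fin n) | ∑ i, |x i| ≤ Real.sqrt k} := by
    intro x hx y hy a b ha hb hab
    simp only [Set.mem_setOf_eq] at *
    calc ∑ i, |(a • x + b • y) i| ≤ ∑ i, (a * |x i| + b * |y i|) := by
          refine Finset.sum_le_sum fun i _ => ?_
          have : (a • x + b • y) i = a * x i + b * y i := rfl
          rw [this]
          calc |a * x i + b * y i| ≤ |a * x i| + |b * y i| := abs_add_le _ _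
            _ = a * |x i| + b * |y i| := by rw [abs_mul, abs_mul, abs_of_nonneg ha, abs_of_nonneg hb]
      _ = a * ∑ i, |x i| + b * ∑ i, |y i| := by rw [Finset.sum_add_distrib, Finset.mul_sum, Finset.mul_sum]
      _ ≤ a * Real.sqrt k + b * Real.sqrt k := by
          refine add_le_add (mul_le_mul_of_nonneg_left hx ha) (mul_le_mul_of_nonneg_left hy hb)
      _ = Real.sqrt k := by rw [← add_mul, hab, one_mul]
  exact convexHull_min hsub hconv hc

lemma l1_le_sqrt_mul_atom (hk : 1 ≤ k) (v : EuclideanSpace ℝ (Fin n)) :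
    ∑ i, |v i| ≤ Real.sqrt k * atomNormSigma n k v := by
  by_cases hv : v = 0
  · simp [hv, atomNormSigma, gauge_zero]
  · have hsk : 0 < Real.sqrt k := Real.sqrt_pos.2 (by exact_mod_cast hk)
    rw [← div_le_iff₀' hsk, atomNormSigma, gauge_def]
    refine le_csInf ⟨∑ i, |v i|, Set.mem_Ioi.2 (sum_abs_pos' v hv), mem_smul_l1 hk v hv⟩ ?_
    rintro b ⟨hb, hmem⟩
    obtain ⟨c, hc, rfl⟩ := hmem
    have hc1 : ∑ i, |c i| ≤ Real.sqrt k := hull_l1_le hk hc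
    have hb' : 0 < b := Set.mem_Ioi.1 hb
    rw [div_le_iff₀ hsk]
    have : ∑ i, |(b • c) i| = b * ∑ i, |c i| := by
      rw [Finset.mul_sum]
      refine Finset.sum_congr rfl fun i _ => ?_
      have : (b • c) i = b * c i := rfl
      rw [this, abs_mul, abs_of_pos hb']
    rw [this]
    nlinarith [mul_le_mul_of_nonneg_left hc1 hb'.le]


lemma atom_le_l2_sparse (v : EuclideanSpace ℝ (Fin n)) (hv : v ∈ sparseVecs n k) :
    atomNormSigma n k v ≤ ‖v‖ := by
  by_cases h : v = 0
  · simp [h, atomNormSigma, gauge_zero]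
  · refine gauge_le_of_mem (norm_nonneg v) ?_
    rw [Set.mem_smul_set_iff_inv_smul_mem₀ (norm_ne_zero_iff.2 h)]
    refine subset_convexHull ℝ _ ⟨?_, ?_⟩
    · obtain ⟨s, hs, h0⟩ := hv
      refine ⟨s, hs, fun i hi => ?_⟩
      show ‖v‖⁻¹ * v i = 0
      rw [h0 i hi, mul_zero]
    · rw [norm_smul, norm_inv, norm_norm, inv_mul_cancel₀ (norm_ne_zero_iff.2 h)]


lemma atom_nonneg (v : EuclideanSpace ℝ (Fin n)) : 0 ≤ atomNormSigma n k v := gauge_nonneg _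

lemma wNorm_coordRestrict (w : Fin n → ℝ) (z : EuclideanSpace ℝ (Fin n)) (S : Finset (Fin n)) :
    wNorm w (coordRestrict z S) = ∑ i ∈ S, w i * |z i| := by
  have h : ∀ i, w i * |coordRestrict z S i| = if i ∈ S then w i * |z i| else 0 := by
    intro i
    unfold coordRestrict
    split <;> simp [*]
  unfold wNorm
  simp only [h, Finset.sum_ite_mem, Finset.univ_inter]

lemma l1_coordRestrict (z : EuclideanSpace ℝ (Fin n)) (S : Finset (Fin n)) :
    ∑ i, |coordRestrict z S i| = ∑ i ∈ S, |z i| := by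
  have h : ∀ i, |coordRestrict z S i| = if i ∈ S then |z i| else 0 := by
    intro i; unfold coordRestrict; split <;> simp [*]
  simp only [h, Finset.sum_ite_mem, Finset.univ_inter]

lemma norm_coordRestrict_sq (z : EuclideanSpace ℝ (Fin n)) (S : Finset (Fin n)) :
    ‖coordRestrict z S‖ ^ 2 = ∑ i ∈ S, (z i) ^ 2 := by
  rw [EuclideanSpace.norm_eq, Real.sq_sqrt (by positivity)]
  have h : ∀ i, ‖coordRestrict z S i‖ ^ 2 = if i ∈ S then (z i) ^ 2 else 0 := by
    intro i; unfold coordRestrict; split <;> simp [*, Real.norm_eq_abs, sq_abs]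
  simp only [h, Finset.sum_ite_mem, Finset.univ_inter]

lemma coordRestrict_sparse (z : EuclideanSpace ℝ (Fin n)) (S : Finset (Fin n)) {m : ℕ}
    (h : ((Finset.univ.filter fun i => z i ≠ 0) \ S).card ≤ m) :
    coordRestrict z Sᶜ ∈ sparseVecs n m := by
  refine ⟨(Finset.univ.filter fun i => z i ≠ 0) \ S, h, fun i hi => ?_⟩
  simp only [Finset.mem_sdiff, Finset.mem_filter, Finset.mem_univ, true_and, not_and, not_not] at hi
  unfold coordRestrict
  by_cases hz : z i = 0
  · simp [hz]
  · simp only [WithLp.ofLp_toLp]; rw [if_neg]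
    simp only [Finset.mem_compl, not_not]
    exact hi hz

lemma T_sub_supp (z : EuclideanSpace ℝ (Fin n)) (Tz : Finset (Fin n))
    (hTm : ∀ i ∈ Tz, ∀ j ∉ Tz, |z j| ≤ |z i|) {j : Fin n} (hjT : j ∉ Tz) (hjz : z j ≠ 0) :
    Tz ⊆ Finset.univ.filter fun i => z i ≠ 0 := by
  intro i hi
  simp only [Finset.mem_filter, Finset.mem_univ, true_and]
  intro h0
  have h := hTm i hi j hjT
  rw [h0, abs_zero] at h
  exact hjz (abs_nonpos_iff.1 h)

lemma exists_nonzero_outside (z : EuclideanSpace ℝ (Fin n)) (Tz : Finset (Fin n))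
    (hcard : Tz.card < (Finset.univ.filter fun i => z i ≠ 0).card) :
    ∃ j, j ∉ Tz ∧ z j ≠ 0 := by
  by_contra h
  push_neg at h
  have hsub : (Finset.univ.filter fun i => z i ≠ 0) ⊆ Tz := by
    intro i hi
    simp only [Finset.mem_filter, Finset.mem_univ, true_and] at hi
    by_contra hc
    exact hi (h i hc)
  exact absurd (Finset.card_le_card hsub) (by omega)


/-- Lemma 12 of the paper, lower bounds on the constrained suprema `D_L(R)` for a
weighted ℓ¹-norm. `T` picks, for each `z`, `k` indices carrying the `k` largest absolute values
of coordinates of `z`; `H₀` carries `k` largest weights, `H₁` carries `L` smallest weights. -/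
theorem DL_lower_bounds
    (n k L : ℕ) (hk : 1 ≤ k) (hL : 1 ≤ L) (hn : k + L ≤ n)
    (w : Fin n → ℝ) (hpos : ∀ i, 0 < w i) (hle : ∀ i, w i ≤ 1) (hmax : ∃ i, w i = 1)
    (T : EuclideanSpace ℝ (Fin n) → Finset (Fin n))
    (hT : ∀ z, (T z).card = k ∧ ∀ i ∈ T z, ∀ j ∉ T z, |z j| ≤ |z i|)
    (H₀ : Finset (Fin n)) (hH₀card : H₀.card = k)
    (hH₀ : ∀ i ∈ H₀, ∀ j ∉ H₀, w j ≤ w i)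
    (H₁ : Finset (Fin n)) (hH₁card : H₁.card = L)
    (hH₁ : ∀ i ∈ H₁, ∀ j ∉ H₁, w i ≤ w j)
    (hdisj : Disjoint H₀ H₁) :
    ((k ≤ L) → (∑ i ∈ H₀, w i < ∑ i ∈ H₁, w i) →
      ((L : ℝ) ^ 2 / k) / ((k : ℝ) * (∑ i ∈ H₁, w i) ^ 2 / (∑ i ∈ H₀, w i) ^ 2)
        ≤ sSup {r : ℝ | ∃ z : EuclideanSpace ℝ (Fin n), z ≠ 0 ∧
            wNorm w (coordRestrict z H₀) = wNorm w (coordRestrict z H₀ᶜ) ∧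
            (Finset.univ.filter fun i => z i ≠ 0).card = k + L ∧
            r = (atomNormSigma n k (coordRestrict z (T z)ᶜ)) ^ 2 / ‖coordRestrict z (T z)‖ ^ 2})
    ∧ ((L ≤ k) →
      (L : ℝ) / k
        ≤ sSup {r : ℝ | ∃ z : EuclideanSpace ℝ (Fin n), z ≠ 0 ∧
            wNorm w (coordRestrict z H₀ᶜ) ≤ wNorm w (coordRestrict z H₀) ∧
            (∀ i, z i ≠ 0 → i ∈ H₀ ∪ H₁) ∧
            r = (atomNormSigma n k (coordRestrict z (T z)ᶜ)) ^ 2 / ‖coordRestrict z (T z)‖ ^ 2}) := by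
  have hkR : (0:ℝ) < k := by exact_mod_cast hk
  have hLR : (0:ℝ) < L := by exact_mod_cast hL
  have hH₀ne : H₀.Nonempty := Finset.card_pos.1 (by omega)
  have hH₁ne : H₁.Nonempty := Finset.card_pos.1 (by omega)
  have hA : (0:ℝ) < ∑ i ∈ H₀, w i := Finset.sum_pos (fun i _ => hpos i) hH₀ne
  have hB : (0:ℝ) < ∑ i ∈ H₁, w i := Finset.sum_pos (fun i _ => hpos i) hH₁ne
  have hsubc : H₁ ⊆ H₀ᶜ := fun i hi => Finset.mem_compl.2 fun h => Finset.disjoint_left.1 hdisj h hi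
  constructor
  · -- Part (i)
    intro hkL hAB
    set A := ∑ i ∈ H₀, w i with hA_def
    set B := ∑ i ∈ H₁, w i with hB_def
    have hbdd : BddAbove {r : ℝ | ∃ z : EuclideanSpace ℝ (Fin n), z ≠ 0 ∧
        wNorm w (coordRestrict z H₀) = wNorm w (coordRestrict z H₀ᶜ) ∧
        (Finset.univ.filter fun i => z i ≠ 0).card = k + L ∧
        r = (atomNormSigma n k (coordRestrict z (T z)ᶜ)) ^ 2 / ‖coordRestrict z (T z)‖ ^ 2} := by
      refine ⟨(L:ℝ)^2 / k, ?_⟩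
      rintro r ⟨z, hz0, -, hcard, rfl⟩
      obtain ⟨hTc, hTm⟩ := hT z
      obtain ⟨j, hjT, hjz⟩ := exists_nonzero_outside z (T z) (by rw [hTc, hcard]; omega)
      have hTs : T z ⊆ Finset.univ.filter fun i => z i ≠ 0 := T_sub_supp z (T z) hTm hjT hjz
      have hTne : (T z).Nonempty := Finset.card_pos.1 (by omega)
      obtain ⟨i₀, hi₀T, hi₀min⟩ := Finset.exists_min_image (T z) (fun i => |z i|) hTne
      have hi₀ : z i₀ ≠ 0 := (Finset.mem_filter.1 (hTs hi₀T)).2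
      have hm : 0 < |z i₀| := abs_pos.2 hi₀
      have hcardL : (((Finset.univ.filter fun i => z i ≠ 0)) \ T z).card = L := by
        rw [Finset.card_sdiff_of_subset hTs, hcard, hTc]
        omega
      have hl1 : ∑ l ∈ (T z)ᶜ, |z l| ≤ (L:ℝ) * |z i₀| := by
        have heq : ∑ l ∈ (T z)ᶜ, |z l|
            = ∑ l ∈ ((Finset.univ.filter fun i => z i ≠ 0)) \ T z, |z l| := by
          refine (Finset.sum_subset ?_ ?_).symm
          · intro l hl
            exact Finset.mem_compl.2 (Finset.mem_sdiff.1 hl).2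
          · intro l hl hl2
            rw [Finset.mem_compl] at hl
            have hzl : z l = 0 := by
              by_contra h0
              exact hl2 (Finset.mem_sdiff.2 ⟨Finset.mem_filter.2 ⟨Finset.mem_univ _, h0⟩, hl⟩)
            rw [hzl, abs_zero]
        rw [heq]
        calc ∑ l ∈ ((Finset.univ.filter fun i => z i ≠ 0)) \ T z, |z l|
            ≤ ∑ _l ∈ ((Finset.univ.filter fun i => z i ≠ 0)) \ T z, |z i₀| :=
              Finset.sum_le_sum fun l hl => hTm i₀ hi₀T l (Finset.mem_sdiff.1 hl).2
          _ = (L:ℝ) * |z i₀| := by rw [Finset.sum_const, hcardL, nsmul_eq_mul]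
      have hatom : atomNormSigma n k (coordRestrict z (T z)ᶜ) ≤ (L:ℝ) * |z i₀| := by
        refine (atom_le_l1 hk _).trans ?_
        rw [l1_coordRestrict]
        exact hl1
      have hden : (k:ℝ) * |z i₀| ^ 2 ≤ ‖coordRestrict z (T z)‖ ^ 2 := by
        rw [norm_coordRestrict_sq]
        calc (k:ℝ) * |z i₀|^2 = ∑ _i ∈ T z, |z i₀|^2 := by
              rw [Finset.sum_const, hTc, nsmul_eq_mul]
          _ ≤ ∑ i ∈ T z, (z i)^2 := Finset.sum_le_sum fun i hi => by
              have h1 := pow_le_pow_left₀ (abs_nonneg (z i₀)) (hi₀min i hi) 2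
              rwa [sq_abs (z i)] at h1
      have hnum : (atomNormSigma n k (coordRestrict z (T z)ᶜ))^2 ≤ ((L:ℝ) * |z i₀|)^2 :=
        pow_le_pow_left₀ (atom_nonneg _) hatom 2
      calc (atomNormSigma n k (coordRestrict z (T z)ᶜ))^2 / ‖coordRestrict z (T z)‖^2
          ≤ ((L:ℝ) * |z i₀|)^2 / ((k:ℝ) * |z i₀|^2) :=
            div_le_div₀ (by positivity) hnum (by positivity) hden
        _ = (L:ℝ)^2 / k := by
            rw [div_eq_div_iff (by positivity) (by positivity)]
            ring
    set z := (WithLp.toLp 2 (fun i => if i ∈ H₀ then B else if i ∈ H₁ then A else 0) : EuclideanSpace ℝ (Fin n))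
      with hz_def
    have hzH₀ : ∀ i ∈ H₀, z i = B := fun i hi => if_pos hi
    have hzH₁ : ∀ i ∈ H₁, z i = A := fun i hi => by
      have h0 : i ∉ H₀ := fun h => Finset.disjoint_left.1 hdisj h hi
      show (if i ∈ H₀ then B else if i ∈ H₁ then A else 0) = A
      rw [if_neg h0, if_pos hi]
    have hzout : ∀ i, i ∉ H₀ → i ∉ H₁ → z i = 0 := fun i h0 h1 => by
      show (if i ∈ H₀ then B else if i ∈ H₁ then A else 0) = 0
      rw [if_neg h0, if_neg h1]
    have hsuppz : (Finset.univ.filter fun i => z i ≠ 0) = H₀ ∪ H₁ := by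
      ext i
      simp only [Finset.mem_filter, Finset.mem_univ, true_and, Finset.mem_union]
      constructor
      · intro h
        by_contra hc
        push_neg at hc
        exact h (hzout i hc.1 hc.2)
      · rintro (h | h)
        · rw [hzH₀ i h]; exact hB.ne'
        · rw [hzH₁ i h]; exact hA.ne'
    have hzne : z ≠ 0 := by
      obtain ⟨i, hi⟩ := hH₀ne
      intro h
      have h0 : z i = 0 := by rw [h]; rfl
      rw [hzH₀ i hi] at h0
      exact hB.ne' h0
    have hcardz : (Finset.univ.filter fun i => z i ≠ 0).card = k + L := by
      rw [hsuppz, Finset.card_union_of_disjoint hdisj, hH₀card, hH₁card]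
    obtain ⟨hTc, hTm⟩ := hT z
    have hTH₀ : T z = H₀ := by
      refine Finset.eq_of_subset_of_card_le ?_ (by rw [hTc, hH₀card])
      intro i hi
      by_contra hiH₀
      have hnotsub : ¬ H₀ ⊆ T z := by
        intro hsub
        have h1 : insert i H₀ ⊆ T z := Finset.insert_subset hi hsub
        have h2 := Finset.card_le_card h1
        rw [Finset.card_insert_of_notMem hiH₀, hH₀card, hTc] at h2
        omega
      obtain ⟨j, hjH₀, hjT⟩ := Finset.not_subset.1 hnotsub
      have hle := hTm i hi j hjT
      rw [hzH₀ j hjH₀, abs_of_pos hB] at hle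
      have hzi : |z i| ≤ A := by
        by_cases h1 : i ∈ H₁
        · rw [hzH₁ i h1, abs_of_pos hA]
        · rw [hzout i hiH₀ h1, abs_zero]; exact hA.le
      linarith
    have hwc : wNorm w (coordRestrict z H₀) = wNorm w (coordRestrict z H₀ᶜ) := by
      rw [wNorm_coordRestrict, wNorm_coordRestrict]
      have h1 : ∑ i ∈ H₀, w i * |z i| = B * A := by
        rw [show ∑ i ∈ H₀, w i * |z i| = ∑ i ∈ H₀, B * w i from
          Finset.sum_congr rfl fun i hi => by rw [hzH₀ i hi, abs_of_pos hB]; ring]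
        rw [← Finset.mul_sum]
      have h2 : ∑ i ∈ H₀ᶜ, w i * |z i| = A * B := by
        rw [show ∑ i ∈ H₀ᶜ, w i * |z i| = ∑ i ∈ H₁, w i * |z i| from
          (Finset.sum_subset hsubc (fun i hi hni => by
            rw [hzout i (Finset.mem_compl.1 hi) hni, abs_zero, mul_zero])).symm]
        rw [show ∑ i ∈ H₁, w i * |z i| = ∑ i ∈ H₁, A * w i from
          Finset.sum_congr rfl fun i hi => by rw [hzH₁ i hi, abs_of_pos hA]; ring]
        rw [← Finset.mul_sum]
      rw [h1, h2]
      ring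
    have hnormT : ‖coordRestrict z (T z)‖^2 = (k:ℝ) * B^2 := by
      rw [norm_coordRestrict_sq, hTH₀]
      rw [show ∑ i ∈ H₀, (z i)^2 = ∑ _i ∈ H₀, B^2 from
        Finset.sum_congr rfl fun i hi => by rw [hzH₀ i hi]]
      rw [Finset.sum_const, hH₀card, nsmul_eq_mul]
    have hsk : (0:ℝ) < Real.sqrt k := Real.sqrt_pos.2 hkR
    have hatomlb : (L:ℝ) * A / Real.sqrt k ≤ atomNormSigma n k (coordRestrict z (T z)ᶜ) := by
      rw [div_le_iff₀ hsk]
      have h1 := l1_le_sqrt_mul_atom hk (coordRestrict z (T z)ᶜ)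
      rw [l1_coordRestrict] at h1
      have h2 : ∑ i ∈ (T z)ᶜ, |z i| = (L:ℝ) * A := by
        rw [hTH₀]
        rw [show ∑ i ∈ H₀ᶜ, |z i| = ∑ i ∈ H₁, |z i| from
          (Finset.sum_subset hsubc (fun i hi hni => by
            rw [hzout i (Finset.mem_compl.1 hi) hni, abs_zero])).symm]
        rw [show ∑ i ∈ H₁, |z i| = ∑ _i ∈ H₁, A from
          Finset.sum_congr rfl fun i hi => by rw [hzH₁ i hi, abs_of_pos hA]]
        rw [Finset.sum_const, hH₁card, nsmul_eq_mul]
      rw [h2] at h1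
      linarith
    have hfin : ((L:ℝ)^2/k) / ((k:ℝ) * B^2 / A^2)
        ≤ (atomNormSigma n k (coordRestrict z (T z)ᶜ))^2 / ‖coordRestrict z (T z)‖^2 := by
      rw [hnormT]
      have hstep : ((L:ℝ) * A / Real.sqrt k)^2
          ≤ (atomNormSigma n k (coordRestrict z (T z)ᶜ))^2 :=
        pow_le_pow_left₀ (by positivity) hatomlb 2
      have heq : ((L:ℝ) * A / Real.sqrt k)^2 = (L:ℝ)^2 * A^2 / k := by
        rw [div_pow, mul_pow, Real.sq_sqrt hkR.le]
      have heq2 : ((L:ℝ)^2/k) / ((k:ℝ) * B^2 / A^2) = ((L:ℝ)^2 * A^2 / k) / ((k:ℝ) * B^2) := by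
        field_simp
      rw [heq2]
      exact div_le_div₀ (by positivity) (heq ▸ hstep) (by positivity) le_rfl
    exact hfin.trans (le_csSup hbdd ⟨z, hzne, hwc, hcardz, rfl⟩)
  · -- Part (ii)
    intro hLk
    have hbdd : BddAbove {r : ℝ | ∃ z : EuclideanSpace ℝ (Fin n), z ≠ 0 ∧
        wNorm w (coordRestrict z H₀ᶜ) ≤ wNorm w (coordRestrict z H₀) ∧
        (∀ i, z i ≠ 0 → i ∈ H₀ ∪ H₁) ∧
        r = (atomNormSigma n k (coordRestrict z (T z)ᶜ)) ^ 2 / ‖coordRestrict z (T z)‖ ^ 2} := by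
      refine ⟨(L:ℝ)/k, ?_⟩
      rintro r ⟨z, hz0, -, hsuppz, rfl⟩
      obtain ⟨hTc, hTm⟩ := hT z
      by_cases hex : ∃ j, j ∉ T z ∧ z j ≠ 0
      · obtain ⟨j, hjT, hjz⟩ := hex
        have hTs := T_sub_supp z (T z) hTm hjT hjz
        have hsupset : (Finset.univ.filter fun i => z i ≠ 0) ⊆ H₀ ∪ H₁ := by
          intro i hi
          exact hsuppz i (Finset.mem_filter.1 hi).2
        have hTs2 : T z ⊆ H₀ ∪ H₁ := hTs.trans hsupset
        have hcardL : ((Finset.univ.filter fun i => z i ≠ 0) \ T z).card ≤ L := by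
          calc ((Finset.univ.filter fun i => z i ≠ 0) \ T z).card
              ≤ ((H₀ ∪ H₁) \ T z).card :=
                Finset.card_le_card (Finset.sdiff_subset_sdiff hsupset le_rfl)
            _ ≤ L := by
                rw [Finset.card_sdiff_of_subset hTs2, Finset.card_union_of_disjoint hdisj,
                  hH₀card, hH₁card, hTc]
                omega
        have hTne : (T z).Nonempty := Finset.card_pos.1 (by omega)
        obtain ⟨i₀, hi₀T, hi₀min⟩ := Finset.exists_min_image (T z) (fun i => |z i|) hTne
        have hi₀ : z i₀ ≠ 0 := (Finset.mem_filter.1 (hTs hi₀T)).2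
        have hm : 0 < |z i₀| := abs_pos.2 hi₀
        have hatom : atomNormSigma n k (coordRestrict z (T z)ᶜ) ≤ ‖coordRestrict z (T z)ᶜ‖ :=
          atom_le_l2_sparse _ (coordRestrict_sparse z (T z) (hcardL.trans hLk))
        have hnum1 : ‖coordRestrict z (T z)ᶜ‖^2 ≤ (L:ℝ) * |z i₀|^2 := by
          rw [norm_coordRestrict_sq]
          have heq : ∑ l ∈ (T z)ᶜ, (z l)^2
              = ∑ l ∈ (Finset.univ.filter fun i => z i ≠ 0) \ T z, (z l)^2 := by
            refine (Finset.sum_subset ?_ ?_).symm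
            · intro l hl
              exact Finset.mem_compl.2 (Finset.mem_sdiff.1 hl).2
            · intro l hl hl2
              rw [Finset.mem_compl] at hl
              have hzl : z l = 0 := by
                by_contra h0
                exact hl2 (Finset.mem_sdiff.2 ⟨Finset.mem_filter.2 ⟨Finset.mem_univ _, h0⟩, hl⟩)
              rw [hzl]
              norm_num
          rw [heq]
          calc ∑ l ∈ (Finset.univ.filter fun i => z i ≠ 0) \ T z, (z l)^2
              ≤ ∑ _l ∈ (Finset.univ.filter fun i => z i ≠ 0) \ T z, |z i₀|^2 := by
                refine Finset.sum_le_sum fun l hl => ?_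
                have h1 := pow_le_pow_left₀ (abs_nonneg (z l))
                  (hTm i₀ hi₀T l (Finset.mem_sdiff.1 hl).2) 2
                rwa [sq_abs (z l)] at h1
            _ ≤ (L:ℝ) * |z i₀|^2 := by
                rw [Finset.sum_const, nsmul_eq_mul]
                exact mul_le_mul_of_nonneg_right (by exact_mod_cast hcardL) (sq_nonneg _)
        have hden : (k:ℝ) * |z i₀| ^ 2 ≤ ‖coordRestrict z (T z)‖ ^ 2 := by
          rw [norm_coordRestrict_sq]
          calc (k:ℝ) * |z i₀|^2 = ∑ _i ∈ T z, |z i₀|^2 := by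
                rw [Finset.sum_const, hTc, nsmul_eq_mul]
            _ ≤ ∑ i ∈ T z, (z i)^2 := Finset.sum_le_sum fun i hi => by
                have h1 := pow_le_pow_left₀ (abs_nonneg (z i₀)) (hi₀min i hi) 2
                rwa [sq_abs (z i)] at h1
        have hnum : (atomNormSigma n k (coordRestrict z (T z)ᶜ))^2 ≤ (L:ℝ) * |z i₀|^2 :=
          (pow_le_pow_left₀ (atom_nonneg _) hatom 2).trans (by
            rw [sq_abs] at hnum1 ⊢
            simpa using hnum1)
        calc (atomNormSigma n k (coordRestrict z (T z)ᶜ))^2 / ‖coordRestrict z (T z)‖^2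
            ≤ ((L:ℝ) * |z i₀|^2) / ((k:ℝ) * |z i₀|^2) :=
              div_le_div₀ (by positivity) hnum (by positivity) hden
          _ = (L:ℝ) / k := by
              rw [div_eq_div_iff (by positivity) (by positivity)]
              ring
      · push_neg at hex
        have hzero : coordRestrict z (T z)ᶜ = 0 := by
          ext i
          show (if i ∈ (T z)ᶜ then z i else 0) = 0
          split
          · exact hex i (Finset.mem_compl.1 (by assumption))
          · rfl
        rw [hzero]
        show atomNormSigma n k 0 ^ 2 / _ ≤ _
        unfold atomNormSigma
        rw [gauge_zero]
        rw [show (0:ℝ)^2 = 0 by norm_num, zero_div]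
        positivity
    have hmono : ∑ i ∈ H₁, w i ≤ ∑ i ∈ H₀, w i := by
      obtain ⟨j₀, hj₀, hj₀min⟩ := Finset.exists_min_image H₀ w hH₀ne
      have h1 : ∑ i ∈ H₁, w i ≤ (L:ℝ) * w j₀ := by
        calc ∑ i ∈ H₁, w i ≤ ∑ _i ∈ H₁, w j₀ := Finset.sum_le_sum fun i hi => by
              have hiH₀ : i ∉ H₀ := fun h => Finset.disjoint_left.1 hdisj h hi
              exact hH₀ j₀ hj₀ i hiH₀
          _ = (L:ℝ) * w j₀ := by rw [Finset.sum_const, hH₁card, nsmul_eq_mul]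
      have h2 : (k:ℝ) * w j₀ ≤ ∑ i ∈ H₀, w i := by
        calc (k:ℝ) * w j₀ = ∑ _i ∈ H₀, w j₀ := by
              rw [Finset.sum_const, hH₀card, nsmul_eq_mul]
          _ ≤ ∑ i ∈ H₀, w i := Finset.sum_le_sum fun i hi => hj₀min i hi
      have h3 : (L:ℝ) * w j₀ ≤ (k:ℝ) * w j₀ :=
        mul_le_mul_of_nonneg_right (by exact_mod_cast hLk) (hpos j₀).le
      linarith
    set z := (WithLp.toLp 2 (fun i => if i ∈ H₀ ∪ H₁ then (1:ℝ) else 0) : EuclideanSpace ℝ (Fin n)) with hz_def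
    have hz1 : ∀ i ∈ H₀ ∪ H₁, z i = 1 := fun i hi => if_pos hi
    have hz0' : ∀ i ∉ H₀ ∪ H₁, z i = 0 := fun i hi => if_neg hi
    have hsuppz : (Finset.univ.filter fun i => z i ≠ 0) = H₀ ∪ H₁ := by
      ext i
      simp only [Finset.mem_filter, Finset.mem_univ, true_and]
      constructor
      · intro h
        by_contra hc
        exact h (hz0' i hc)
      · intro h
        rw [hz1 i h]
        exact one_ne_zero
    have hzne : z ≠ 0 := by
      obtain ⟨i, hi⟩ := hH₀ne
      intro h
      have h0 : z i = 0 := by rw [h]; rfl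
      rw [hz1 i (Finset.mem_union_left _ hi)] at h0
      exact one_ne_zero h0
    have hcardu : (H₀ ∪ H₁).card = k + L := by
      rw [Finset.card_union_of_disjoint hdisj, hH₀card, hH₁card]
    obtain ⟨hTc, hTm⟩ := hT z
    obtain ⟨j, hjT, hjz⟩ := exists_nonzero_outside z (T z) (by rw [hTc, hsuppz, hcardu]; omega)
    have hTs : T z ⊆ H₀ ∪ H₁ := by
      have h := T_sub_supp z (T z) hTm hjT hjz
      rwa [hsuppz] at h
    have hsuppcond : ∀ i, z i ≠ 0 → i ∈ H₀ ∪ H₁ := fun i hi => by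
      by_contra h
      exact hi (hz0' i h)
    have hwc : wNorm w (coordRestrict z H₀ᶜ) ≤ wNorm w (coordRestrict z H₀) := by
      rw [wNorm_coordRestrict, wNorm_coordRestrict]
      have h1 : ∑ i ∈ H₀, w i * |z i| = ∑ i ∈ H₀, w i :=
        Finset.sum_congr rfl fun i hi => by
          rw [hz1 i (Finset.mem_union_left _ hi)]
          simp
      have h2 : ∑ i ∈ H₀ᶜ, w i * |z i| = ∑ i ∈ H₁, w i := by
        rw [show ∑ i ∈ H₀ᶜ, w i * |z i| = ∑ i ∈ H₁, w i * |z i| from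
          (Finset.sum_subset hsubc (fun i hi hni => by
            rw [hz0' i ?_, abs_zero, mul_zero]
            intro hu
            rcases Finset.mem_union.1 hu with h | h
            · exact (Finset.mem_compl.1 hi) h
            · exact hni h)).symm]
        exact Finset.sum_congr rfl fun i hi => by
          rw [hz1 i (Finset.mem_union_right _ hi)]
          simp
      rw [h1, h2]
      exact hmono
    have hden : ‖coordRestrict z (T z)‖^2 = (k:ℝ) := by
      rw [norm_coordRestrict_sq]
      rw [show ∑ i ∈ T z, (z i)^2 = ∑ _i ∈ T z, (1:ℝ) from
        Finset.sum_congr rfl fun i hi => by rw [hz1 i (hTs hi)]; norm_num]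
      rw [Finset.sum_const, hTc, nsmul_eq_mul, mul_one]
    have hcardsd : ((H₀ ∪ H₁) \ T z).card = L := by
      rw [Finset.card_sdiff_of_subset hTs, hcardu, hTc]
      omega
    have hcardsd' : ((Finset.univ.filter fun i => z i ≠ 0) \ T z).card = L := by
      rw [hsuppz, hcardsd]
    have hnum : (atomNormSigma n k (coordRestrict z (T z)ᶜ))^2 = (L:ℝ) := by
      have hatomeq : atomNormSigma n k (coordRestrict z (T z)ᶜ) = ‖coordRestrict z (T z)ᶜ‖ :=
        le_antisymm
          (atom_le_l2_sparse _ (coordRestrict_sparse z (T z) (by rw [hcardsd']; exact hLk)))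
          (l2_le_atom hk _)
      rw [hatomeq, norm_coordRestrict_sq]
      have heq : ∑ l ∈ (T z)ᶜ, (z l)^2 = ∑ l ∈ (H₀ ∪ H₁) \ T z, (z l)^2 := by
        refine (Finset.sum_subset (fun l hl => Finset.mem_compl.2 (Finset.mem_sdiff.1 hl).2) ?_).symm
        intro l hl hl2
        have hzl : z l = 0 := by
          by_contra h0
          exact hl2 (Finset.mem_sdiff.2 ⟨hsuppcond l h0, Finset.mem_compl.1 hl⟩)
        rw [hzl]
        norm_num
      rw [heq]
      rw [show ∑ l ∈ (H₀ ∪ H₁) \ T z, (z l)^2 = ∑ _l ∈ (H₀ ∪ H₁) \ T z, (1:ℝ) from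
        Finset.sum_congr rfl fun l hl => by rw [hz1 l (Finset.mem_sdiff.1 hl).1]; norm_num]
      rw [Finset.sum_const, hcardsd, nsmul_eq_mul, mul_one]
    have hfin : ((L:ℝ))/k
        = (atomNormSigma n k (coordRestrict z (T z)ᶜ))^2 / ‖coordRestrict z (T z)‖^2 := by
      rw [hnum, hden]
    rw [hfin]
    exact le_csSup hbdd ⟨z, hzne, hwc, hsuppcond, rfl⟩


end
end
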